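/- arXiv:1807.07527 — 6 statements merged into one kernel-verified Lean document; each statement's English description precedes it below -/
import Mathlib

section
/- Let d ≥ 1 be an integer, w > 0, and 0 < r with 2r ≤ 3w, and fix x ∈ ℝ^d. If an offset v is sampled uniformly from the cube [0, 3w]^d, then the probability that there exists u ∈ v + 3w·ℤ^d with ‖x − u‖₂ ≤ r is exactly V_d · (r/(3w))^d. -/
open MeasureTheory Metric Submodule Pointwise


variable {d : ℕ}

/-- coordinate evaluation on EuclideanSpace is measurable -/
lemma coordMeasurable (i : Fin d) : Measurable fun v : EuclideanSpace ℝ (Fin d) => v i :=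
  (measurable_pi_apply i).comp ((MeasurableEquiv.toLp 2 (Fin d → ℝ)).symm).measurable

lemma volTransfer (s : Set (Fin d → ℝ))
    (hs : MeasurableSet ((MeasurableEquiv.toLp 2 (Fin d → ℝ)).symm ⁻¹' s)) :
    volume s = volume ((MeasurableEquiv.toLp 2 (Fin d → ℝ)).symm ⁻¹' s) :=
  ((EuclideanSpace.volume_preserving_symm_measurableEquiv_toLp (Fin d)).measure_preimage
    ((((MeasurableEquiv.toLp 2 (Fin d → ℝ)).symm).measurableSet_preimage).mp hs).nullMeasurableSet).symm



variable {d : ℕ}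

noncomputable def latB {N : ℝ} (hN : 0 < N) : Module.Basis (Fin d) ℝ (EuclideanSpace ℝ (Fin d)) :=
  (EuclideanSpace.basisFun (Fin d) ℝ).toBasis.isUnitSMul
    (fun _ => isUnit_iff_ne_zero.mpr hN.ne')

lemma latB_repr {N : ℝ} (hN : 0 < N) (v : EuclideanSpace ℝ (Fin d)) (i : Fin d) :
    (latB hN).repr v i = N⁻¹ * v i := by
  unfold latB Module.Basis.isUnitSMul
  rw [Module.Basis.repr_unitsSMul]
  simp [EuclideanSpace.basisFun_repr, Units.smul_def]

/-- lattice point -/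
noncomputable def latP (d : ℕ) (N : ℝ) (k : Fin d → ℤ) : EuclideanSpace ℝ (Fin d) :=
  (WithLp.equiv 2 (Fin d → ℝ)).symm (fun i => N * k i)

lemma latP_apply (N : ℝ) (k : Fin d → ℤ) (i : Fin d) : latP d N k i = N * k i := rfl

lemma mem_latL {N : ℝ} (hN : 0 < N) (u : EuclideanSpace ℝ (Fin d)) :
    u ∈ span ℤ (Set.range (latB (d := d) hN)) ↔ ∃ k : Fin d → ℤ, u = latP d N k := by
  rw [Module.Basis.mem_span_iff_repr_mem]
  constructor
  · intro h
    choose k hk using h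
    refine ⟨k, PiLp.ext fun i => ?_⟩
    have := hk i
    rw [latB_repr hN] at this
    have : (k i : ℝ) = N⁻¹ * u i := by simpa [algebraMap] using this
    have : u i = N * k i := by field_simp at this ⊢; linarith [this]
    simpa [latP_apply] using this
  · rintro ⟨k, rfl⟩
    intro i
    refine ⟨k i, ?_⟩
    rw [latB_repr hN, latP_apply]
    field_simp
    exact eq_intCast _ _

lemma latFD_eq {N : ℝ} (hN : 0 < N) :
    ZSpan.fundamentalDomain (latB (d := d) hN)
      = {v : EuclideanSpace ℝ (Fin d) | ∀ i, v i ∈ Set.Ico (0:ℝ) N} := by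
  ext v
  simp only [ZSpan.mem_fundamentalDomain, Set.mem_setOf_eq]
  refine forall_congr' fun i => ?_
  rw [latB_repr hN, inv_mul_eq_div]
  simp only [Set.mem_Ico]
  constructor
  · rintro ⟨h1, h2⟩
    rw [div_lt_one hN] at h2
    refine ⟨?_, h2⟩
    nlinarith [mul_nonneg h1 hN.le, div_mul_cancel₀ (v i) hN.ne']
  · rintro ⟨h1, h2⟩
    exact ⟨div_nonneg h1 hN.le, (div_lt_one hN).mpr h2⟩

lemma coord_abs_le_norm (v : EuclideanSpace ℝ (Fin d)) (i : Fin d) : |v i| ≤ ‖v‖ := by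
  rw [EuclideanSpace.norm_eq]
  rw [← Real.sqrt_sq_eq_abs]
  apply Real.sqrt_le_sqrt
  refine Finset.single_le_sum (f := fun j => ‖v j‖ ^ 2) (fun j _ => by positivity) (Finset.mem_univ i) |>.trans_eq' ?_
  simp [Real.norm_eq_abs, sq_abs]

lemma latP_norm_lb {N : ℝ} (hN : 0 < N) {k : Fin d → ℤ} (hk : k ≠ 0) :
    N ≤ ‖latP d N k‖ := by
  have : ∃ j, k j ≠ 0 := by
    by_contra h; push_neg at h; exact hk (funext h)
  obtain ⟨j, hj⟩ := this
  have h1 : (1:ℝ) ≤ |(k j : ℝ)| := by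
    rw [← Int.cast_abs]
    exact_mod_cast Int.one_le_abs hj
  calc N = N * 1 := by ring
    _ ≤ N * |(k j : ℝ)| := by nlinarith
    _ = |latP d N k j| := by rw [latP_apply, abs_mul, abs_of_pos hN]
    _ ≤ ‖latP d N k‖ := coord_abs_le_norm _ j

lemma hyperplane_null (j : Fin d) (a : ℝ) :
    volume {v : EuclideanSpace ℝ (Fin d) | v j = a} = 0 := by
  have : volume {z : Fin d → ℝ | z j = a} = 0 := by
    classical
    have hset : {z : Fin d → ℝ | z j = a}
        = Set.pi Set.univ (fun i => if i = j then {a} else Set.univ) := by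
      ext z
      simp only [Set.mem_setOf_eq, Set.mem_pi, Set.mem_univ, forall_true_left]
      constructor
      · intro h i; by_cases hij : i = j <;> simp [hij, h]
      · intro h; simpa using h j
    rw [hset, volume_pi_pi]
    apply Finset.prod_eq_zero (Finset.mem_univ j)
    simp
  calc volume {v : EuclideanSpace ℝ (Fin d) | v j = a}
      = volume {z : Fin d → ℝ | z j = a} := (volTransfer {z : Fin d → ℝ | z j = a} (by
        show MeasurableSet {v : EuclideanSpace ℝ (Fin d) | v j = a}
        exact (coordMeasurable j) (measurableSet_singleton a))).symm
    _ = 0 := this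

lemma latP_neg (N : ℝ) (k : Fin d → ℤ) : latP d N (-k) = -latP d N k := by
  refine PiLp.ext fun i => ?_
  show (N * ((-k) i : ℤ) : ℝ) = -(N * k i)
  simp only [Pi.neg_apply, Int.cast_neg]; ring

lemma vol_cube_inter_balls (d : ℕ) (hd : 1 ≤ d) {N r : ℝ} (hN : 0 < N) (hr : 0 < r)
    (hrN : 2 * r ≤ N) (c : EuclideanSpace ℝ (Fin d)) :
    volume {v : EuclideanSpace ℝ (Fin d) |
        (∀ i, v i ∈ Set.Icc (0:ℝ) N) ∧ ∃ k : Fin d → ℤ, dist v (c - latP d N k) ≤ r}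
      = volume (closedBall c r) := by
  haveI : Inhabited (Fin d) := ⟨⟨0, hd⟩⟩
  haveI : Nontrivial (EuclideanSpace ℝ (Fin d)) := inferInstance
  set L := span ℤ (Set.range (latB (d := d) hN)) with hLdef
  set F := ZSpan.fundamentalDomain (latB (d := d) hN) with hFdef
  have hFD := ZSpan.isAddFundamentalDomain (latB (d := d) hN) volume
  have hFmeas : MeasurableSet F := ZSpan.fundamentalDomain_measurableSet _
  set U : Set (EuclideanSpace ℝ (Fin d)) := ⋃ g : L, closedBall (c + ↑g) r with hUdef
  set cubeC : Set (EuclideanSpace ℝ (Fin d)) :=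
    {v | ∀ i, v i ∈ Set.Icc (0:ℝ) N} with hcubedef
  have hS : {v : EuclideanSpace ℝ (Fin d) |
      (∀ i, v i ∈ Set.Icc (0:ℝ) N) ∧ ∃ k : Fin d → ℤ, dist v (c - latP d N k) ≤ r}
      = cubeC ∩ U := by
    ext v
    simp only [Set.mem_setOf_eq, Set.mem_inter_iff, hUdef, Set.mem_iUnion, mem_closedBall,
      hcubedef]
    constructor
    · rintro ⟨h1, k, hk⟩
      refine ⟨h1, ⟨latP d N (-k), (mem_latL hN _).mpr ⟨-k, rfl⟩⟩, ?_⟩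
      have he : c + latP d N (-k) = c - latP d N k := by
        rw [latP_neg, sub_eq_add_neg]
      rw [he]; exact hk
    · rintro ⟨h1, ⟨g, hg⟩, hd2⟩
      obtain ⟨k, rfl⟩ := (mem_latL hN _).mp hg
      refine ⟨h1, -k, ?_⟩
      have he : c - latP d N (-k) = c + latP d N k := by
        rw [latP_neg, sub_neg_eq_add]
      rw [he]; exact hd2
  have hFsub : F ⊆ cubeC := by
    rw [hFdef, latFD_eq hN]
    intro v hv i
    exact Set.Ico_subset_Icc_self (hv i)
  have hnull : volume (cubeC \ F) = 0 := by
    refine measure_mono_null ?_ (measure_iUnion_null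
      (fun j => hyperplane_null (d := d) j N))
    rintro v ⟨hv, hvF⟩
    rw [hFdef, latFD_eq hN] at hvF
    obtain ⟨i, hi⟩ := not_forall.mp hvF
    have h2 := hv i
    simp only [Set.mem_Ico, not_and, not_lt] at hi
    simp only [Set.mem_Icc] at h2
    exact Set.mem_iUnion.mpr ⟨i, le_antisymm h2.2 (hi h2.1)⟩
  have hbd : ∀ g g' : L, g ≠ g' →
      volume (closedBall (c + ↑g) r ∩ closedBall (c + ↑g') r) = 0 := by
    intro g g' hgg'
    refine measure_mono_null ?_ (Measure.addHaar_sphere volume (c + (↑g : EuclideanSpace ℝ (Fin d))) r)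
    rintro v ⟨h1, h2⟩
    rw [mem_closedBall] at h1 h2
    have hcd : N ≤ dist (c + (↑g : EuclideanSpace ℝ (Fin d))) (c + ↑g') := by
      rw [dist_add_left, dist_eq_norm]
      have hmem : ((↑g : EuclideanSpace ℝ (Fin d)) - ↑g') ∈ L := sub_mem g.2 g'.2
      obtain ⟨k, hk⟩ := (mem_latL hN _).mp hmem
      have hkne : k ≠ 0 := by
        rintro rfl
        apply hgg'
        have h0 : latP d N 0 = 0 := by
          refine PiLp.ext fun i => ?_; show (N * ((0:Fin d → ℤ) i : ℤ) : ℝ) = 0; simp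
        exact Subtype.ext (sub_eq_zero.mp (by rw [hk, h0]))
      rw [hk]
      exact latP_norm_lb hN hkne
    have htri : dist (c + (↑g : EuclideanSpace ℝ (Fin d))) (c + ↑g')
        ≤ dist v (c + ↑g) + dist v (c + ↑g') := dist_triangle_left _ _ _
    show dist v (c + (↑g : EuclideanSpace ℝ (Fin d))) = r
    linarith
  have hvadd : ∀ g : L, (g : EuclideanSpace ℝ (Fin d)) +ᵥ closedBall c r
      = closedBall (c + ↑g) r := by
    intro g
    ext v
    rw [Set.mem_vadd_set_iff_neg_vadd_mem, vadd_eq_add, mem_closedBall, mem_closedBall,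
      dist_eq_norm, dist_eq_norm]
    have : -(↑g : EuclideanSpace ℝ (Fin d)) + v - c = v - (c + ↑g) := by abel
    rw [this]
  haveI : MeasurableVAdd L (EuclideanSpace ℝ (Fin d)) :=
    (inferInstance : MeasurableVAdd L.toAddSubgroup (EuclideanSpace ℝ (Fin d)))
  haveI : VAddInvariantMeasure L (EuclideanSpace ℝ (Fin d)) volume :=
    (inferInstance : VAddInvariantMeasure L.toAddSubgroup (EuclideanSpace ℝ (Fin d)) volume)
  have key : volume (F ∩ U) = volume (closedBall c r) := by
    rw [hUdef, Set.inter_iUnion]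
    have hdisj : Pairwise (Function.onFun (AEDisjoint volume)
        fun g : L => F ∩ closedBall (c + ↑g) r) := by
      intro g g' hne
      have hsub : (F ∩ closedBall (c + ↑g) r) ∩ (F ∩ closedBall (c + ↑g') r)
          ⊆ closedBall (c + ↑g) r ∩ closedBall (c + ↑g') r := fun v hv => ⟨hv.1.2, hv.2.2⟩
      exact measure_mono_null hsub (hbd g g' hne)
    rw [measure_iUnion₀ hdisj
      (fun g => (hFmeas.inter measurableSet_closedBall).nullMeasurableSet)]
    rw [hFD.measure_eq_tsum (closedBall c r)]
    refine tsum_congr fun g => ?_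
    rw [Set.inter_comm]
    congr 1
    have : (g : L) +ᵥ closedBall c r = (↑g : EuclideanSpace ℝ (Fin d)) +ᵥ closedBall c r := rfl
    rw [this, hvadd]
  have hSU : volume (cubeC ∩ U) = volume (F ∩ U) := by
    apply le_antisymm
    · calc volume (cubeC ∩ U) ≤ volume ((F ∩ U) ∪ (cubeC \ F)) := by
            apply measure_mono
            rintro v ⟨h1, h2⟩
            by_cases hvF : v ∈ F
            exacts [Or.inl ⟨hvF, h2⟩, Or.inr ⟨h1, hvF⟩]
        _ ≤ volume (F ∩ U) + volume (cubeC \ F) := measure_union_le _ _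
        _ = volume (F ∩ U) := by rw [hnull, add_zero]
    · exact measure_mono (Set.inter_subset_inter_left _ hFsub)
  rw [hS, hSU, key]

/-- The Lebesgue volume of the closed unit Euclidean ball in `ℝ^d`. -/
noncomputable def unitBallVol (d : ℕ) : ℝ :=
  (volume {z : Fin d → ℝ | Real.sqrt (∑ i, (z i) ^ 2) ≤ 1}).toReal

lemma unitBallVol_eq (d : ℕ) :
    unitBallVol d = (volume (closedBall (0 : EuclideanSpace ℝ (Fin d)) 1)).toReal := by
  unfold unitBallVol
  congr 1
  have h1 : ((MeasurableEquiv.toLp 2 (Fin d → ℝ)).symm) ⁻¹'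
        {z : Fin d → ℝ | Real.sqrt (∑ i, (z i) ^ 2) ≤ 1}
      = closedBall (0 : EuclideanSpace ℝ (Fin d)) 1 := by
    ext v
    rw [Set.mem_preimage, mem_closedBall, dist_zero_right, EuclideanSpace.norm_eq]
    show Real.sqrt (∑ i, (v i) ^ 2) ≤ 1 ↔ _
    simp [Real.norm_eq_abs, sq_abs]
  rw [volTransfer _ (h1 ▸ measurableSet_closedBall), h1]

/-- If the offset `v` is sampled uniformly from the cube `[0, 3w]^d`, then the probability that
some lattice ball center `u ∈ v + 3w·ℤ^d` satisfies `‖x − u‖₂ ≤ r` is exactly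
`V_d · (r/(3w))^d`. -/
theorem prob_lattice_ball_contains (d : ℕ) (hd : 1 ≤ d) (w r : ℝ) (hw : 0 < w) (hr : 0 < r)
    (hrw : 2 * r ≤ 3 * w) (x : Fin d → ℝ) :
    (volume {v : Fin d → ℝ | (∀ i, v i ∈ Set.Icc (0 : ℝ) (3 * w)) ∧
        ∃ k : Fin d → ℤ,
          Real.sqrt (∑ i, (x i - (v i + 3 * w * (k i))) ^ 2) ≤ r}).toReal / (3 * w) ^ d
      = unitBallVol d * (r / (3 * w)) ^ d := by
  have hN : (0:ℝ) < 3 * w := by linarith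
  set c : EuclideanSpace ℝ (Fin d) := ((MeasurableEquiv.toLp 2 (Fin d → ℝ)).symm).symm x with hc
  have hpre : ((MeasurableEquiv.toLp 2 (Fin d → ℝ)).symm) ⁻¹'
      {v : Fin d → ℝ | (∀ i, v i ∈ Set.Icc (0 : ℝ) (3 * w)) ∧
        ∃ k : Fin d → ℤ, Real.sqrt (∑ i, (x i - (v i + 3 * w * (k i))) ^ 2) ≤ r}
      = {v : EuclideanSpace ℝ (Fin d) | (∀ i, v i ∈ Set.Icc (0:ℝ) (3 * w)) ∧
        ∃ k : Fin d → ℤ, dist v (c - latP d (3 * w) k) ≤ r} := by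
    ext v
    show ((∀ i, v i ∈ Set.Icc (0:ℝ) (3 * w)) ∧
        ∃ k : Fin d → ℤ, Real.sqrt (∑ i, (x i - (v i + 3 * w * (k i))) ^ 2) ≤ r) ↔ _
    refine and_congr Iff.rfl (exists_congr fun k => ?_)
    rw [EuclideanSpace.dist_eq]
    have hterm : ∀ i, dist (v i) ((c - latP d (3 * w) k) i) ^ 2
        = (x i - (v i + 3 * w * (k i))) ^ 2 := by
      intro i
      have hci : (c - latP d (3 * w) k) i = x i - 3 * w * k i := rfl
      rw [hci, Real.dist_eq, sq_abs]; ring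
    rw [Finset.sum_congr rfl fun i _ => hterm i]
  have hmeasE : MeasurableSet {v : EuclideanSpace ℝ (Fin d) |
      (∀ i, v i ∈ Set.Icc (0:ℝ) (3 * w)) ∧
      ∃ k : Fin d → ℤ, dist v (c - latP d (3 * w) k) ≤ r} := by
    have heq : {v : EuclideanSpace ℝ (Fin d) | (∀ i, v i ∈ Set.Icc (0:ℝ) (3 * w)) ∧
        ∃ k : Fin d → ℤ, dist v (c - latP d (3 * w) k) ≤ r}
        = (⋂ i, (fun v : EuclideanSpace ℝ (Fin d) => v i) ⁻¹' Set.Icc (0:ℝ) (3 * w)) ∩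
          ⋃ k : Fin d → ℤ, closedBall (c - latP d (3 * w) k) r := by
      ext v
      simp only [Set.mem_setOf_eq, Set.mem_inter_iff, Set.mem_iInter, Set.mem_iUnion,
        mem_closedBall, Set.mem_preimage]
    rw [heq]
    exact (MeasurableSet.iInter fun i => coordMeasurable i measurableSet_Icc).inter
      (MeasurableSet.iUnion fun k => measurableSet_closedBall)
  have hvol : volume {v : Fin d → ℝ | (∀ i, v i ∈ Set.Icc (0 : ℝ) (3 * w)) ∧
      ∃ k : Fin d → ℤ, Real.sqrt (∑ i, (x i - (v i + 3 * w * (k i))) ^ 2) ≤ r}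
      = ENNReal.ofReal (r ^ d) * volume (closedBall (0 : EuclideanSpace ℝ (Fin d)) 1) := by
    rw [volTransfer _ (by rw [hpre]; exact hmeasE), hpre,
      vol_cube_inter_balls d hd hN hr hrw c,
      Measure.addHaar_closedBall' volume c hr.le, finrank_euclideanSpace_fin]
  rw [hvol, unitBallVol_eq d]
  have hfin : volume (closedBall (0 : EuclideanSpace ℝ (Fin d)) 1) ≠ ⊤ :=
    (isCompact_closedBall _ _).measure_lt_top.ne
  rw [ENNReal.toReal_mul, ENNReal.toReal_ofReal (by positivity)]
  rw [div_pow]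
  have h3w : (3 * w) ^ d ≠ 0 := by positivity
  field_simp
end

section
/- Let d ≥ 1 be an integer, w > 0, δ > 0, and set w' := w − (δ√d)/2, assuming w' > 0, 1 + δ√d ≤ 2w', and 2w' < 3w. Let x, y ∈ ℝ^d satisfy ‖x − y‖₂ ≤ 1 + δ√d. If an offset v is sampled uniformly from the cube [0, 3w]^d, then the probability that there exists u ∈ v + 3w·ℤ^d with both x, y ∈ Ball(u, w') is at least 2 · V_d · (w'/(3w))^d · I_d((1 + δ√d)/(2w')). -/
open MeasureTheory
open Pointwise

/-- The Lebesgue volume `C_d(u)` of the spherical cap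
`{z ∈ ℝ^d : ‖z‖₂ ≤ 1, z₁ ≥ u}` of the unit `d`-ball. -/
noncomputable def capVol (d : ℕ) (hd : 0 < d) (u : ℝ) : ℝ :=
  (volume {z : Fin d → ℝ | Real.sqrt (∑ i, (z i) ^ 2) ≤ 1 ∧ u ≤ z ⟨0, hd⟩}).toReal

noncomputable def capVolE (d : ℕ) (hd : 0 < d) (u₀ : ℝ) : ENNReal :=
  volume {z : EuclideanSpace ℝ (Fin d) | ‖z‖ ≤ 1 ∧ u₀ ≤ z ⟨0, hd⟩}

lemma capE_closed (d : ℕ) (u₀ : ℝ) (f : EuclideanSpace ℝ (Fin d)) :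
    IsClosed {z : EuclideanSpace ℝ (Fin d) | ‖z‖ ≤ 1 ∧ u₀ ≤ (inner ℝ f z : ℝ)} := by
  have h2 : Continuous fun z : EuclideanSpace ℝ (Fin d) => (inner ℝ f z : ℝ) :=
    continuous_const.inner continuous_id'
  exact (isClosed_le continuous_norm continuous_const).inter
    (isClosed_le continuous_const h2)

lemma rot (d : ℕ) (hd : 0 < d) (u₀ : ℝ) (f : EuclideanSpace ℝ (Fin d)) (hf : ‖f‖ = 1) :
    volume {z : EuclideanSpace ℝ (Fin d) | ‖z‖ ≤ 1 ∧ u₀ ≤ (inner ℝ f z : ℝ)}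
      = capVolE d hd u₀ := by
  set e₀ : EuclideanSpace ℝ (Fin d) := EuclideanSpace.single ⟨0, hd⟩ (1:ℝ) with he₀
  have he₀n : ‖e₀‖ = 1 := by simp [he₀, EuclideanSpace.norm_single]
  set T := Submodule.reflection (ℝ ∙ (e₀ - f))ᗮ with hT
  have hTe : T e₀ = f := Submodule.reflection_sub (by rw [he₀n, hf])
  have hmeas := (capE_closed d u₀ f).measurableSet
  have := (T.measurePreserving).measure_preimage hmeas.nullMeasurableSet
  rw [capVolE, ← this]
  congr 1
  ext z
  simp only [Set.mem_preimage, Set.mem_setOf_eq, LinearIsometryEquiv.norm_map]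
  have : (inner ℝ f (T z) : ℝ) = z ⟨0, hd⟩ := by
    rw [← hTe, T.inner_map_map, he₀, EuclideanSpace.inner_single_left]
    simp
  rw [this]

lemma capSlice (d : ℕ) (hd : 0 < d) (u₀ w' : ℝ) (hw' : 0 < w')
    (f p : EuclideanSpace ℝ (Fin d)) (hf : ‖f‖ = 1) :
    volume {z : EuclideanSpace ℝ (Fin d) | ‖z - p‖ ≤ w' ∧ w' * u₀ ≤ (inner ℝ f (z - p) : ℝ)}
      = ENNReal.ofReal (w' ^ d) * capVolE d hd u₀ := by
  set K₁ := {u : EuclideanSpace ℝ (Fin d) | ‖u‖ ≤ 1 ∧ u₀ ≤ (inner ℝ f u : ℝ)} with hK₁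
  have hset : {z : EuclideanSpace ℝ (Fin d) | ‖z - p‖ ≤ w' ∧ w' * u₀ ≤ (inner ℝ f (z - p) : ℝ)}
      = (fun z => z + (-p)) ⁻¹' (w' • K₁) := by
    ext z
    simp only [Set.mem_setOf_eq, Set.mem_preimage, ← sub_eq_add_neg]
    rw [Set.mem_smul_set_iff_inv_smul_mem₀ hw'.ne']
    have h1 : ‖w'⁻¹ • (z - p)‖ = w'⁻¹ * ‖z - p‖ := by
      rw [norm_smul, Real.norm_eq_abs, abs_of_pos (inv_pos.mpr hw')]
    have h2 : (inner ℝ f (w'⁻¹ • (z - p)) : ℝ) = w'⁻¹ * (inner ℝ f (z - p) : ℝ) :=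
      real_inner_smul_right f _ _
    simp only [hK₁, Set.mem_setOf_eq, h1, h2, le_inv_mul_iff₀ hw', inv_mul_le_iff₀ hw',
      mul_one]
  rw [hset, measure_preimage_add_right volume (-p) _,
    Measure.addHaar_smul_of_nonneg volume hw'.le K₁, finrank_euclideanSpace_fin,
    rot d hd u₀ f hf]

lemma exists_dir (d : ℕ) (hd : 0 < d) (v : EuclideanSpace ℝ (Fin d)) :
    ∃ e : EuclideanSpace ℝ (Fin d), ‖e‖ = 1 ∧ v = ‖v‖ • e := by
  by_cases h : v = 0
  · refine ⟨EuclideanSpace.single ⟨0, hd⟩ (1:ℝ), by simp [EuclideanSpace.norm_single], ?_⟩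
    simp [h]
  · refine ⟨‖v‖⁻¹ • v, ?_, ?_⟩
    · rw [norm_smul, Real.norm_eq_abs, abs_of_pos (inv_pos.mpr (norm_pos_iff.mpr h)),
        inv_mul_cancel₀ (norm_ne_zero_iff.mpr h)]
    · rw [smul_smul, mul_inv_cancel₀ (norm_ne_zero_iff.mpr h), one_smul]

lemma lensVol (d : ℕ) (hd : 0 < d) (u₀ w' : ℝ) (hw' : 0 < w')
    (x y : EuclideanSpace ℝ (Fin d)) (hD : ‖y - x‖ ≤ 2 * (w' * u₀)) :
    ENNReal.ofReal (w' ^ d) * capVolE d hd u₀ * 2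
      ≤ volume {z : EuclideanSpace ℝ (Fin d) | ‖z - x‖ ≤ w' ∧ ‖z - y‖ ≤ w'} := by
  obtain ⟨e, he1, hev⟩ := exists_dir d hd (y - x)
  set c : ℝ := w' * u₀ with hc
  set D : ℝ := ‖y - x‖ with hDdef
  have hD0 : 0 ≤ D := norm_nonneg _
  set A := {z : EuclideanSpace ℝ (Fin d) | ‖z - x‖ ≤ w' ∧ c ≤ (inner ℝ e (z - x) : ℝ)} with hA
  set B := {z : EuclideanSpace ℝ (Fin d) | ‖z - y‖ ≤ w' ∧ c ≤ (inner ℝ (-e) (z - y) : ℝ)} with hB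
  set L := {z : EuclideanSpace ℝ (Fin d) | ‖z - x‖ ≤ w' ∧ ‖z - y‖ ≤ w'} with hL
  have hAL : A ⊆ L := by
    rintro z ⟨h1, h2⟩
    refine ⟨h1, ?_⟩
    have hzy : z - y = (z - x) - (y - x) := by abel
    have hsq : ‖z - y‖ ^ 2 = ‖z - x‖ ^ 2 - 2 * (inner ℝ (z - x) (y - x) : ℝ) + ‖y - x‖ ^ 2 := by
      rw [hzy]; exact norm_sub_sq_real _ _
    have hip : (inner ℝ (z - x) (y - x) : ℝ) = D * (inner ℝ e (z - x) : ℝ) := by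
      rw [hev, real_inner_smul_right, real_inner_comm]
    have key : ‖z - y‖ ^ 2 ≤ w' ^ 2 := by
      rw [hsq, hip, ← hDdef]
      nlinarith [norm_nonneg (z - x)]
    nlinarith [norm_nonneg (z - y)]
  have hBL : B ⊆ L := by
    rintro z ⟨h1, h2⟩
    refine ⟨?_, h1⟩
    have h2' : (inner ℝ e (z - y) : ℝ) ≤ -c := by
      have := h2; rw [inner_neg_left] at this; linarith
    have hzx : z - x = (z - y) + (y - x) := by abel
    have hsq : ‖z - x‖ ^ 2 = ‖z - y‖ ^ 2 + 2 * (inner ℝ (z - y) (y - x) : ℝ) + ‖y - x‖ ^ 2 := by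
      rw [hzx]; exact norm_add_sq_real _ _
    have hip : (inner ℝ (z - y) (y - x) : ℝ) = D * (inner ℝ e (z - y) : ℝ) := by
      rw [hev, real_inner_smul_right, real_inner_comm]
    have key : ‖z - x‖ ^ 2 ≤ w' ^ 2 := by
      rw [hsq, hip, ← hDdef]
      nlinarith [norm_nonneg (z - y)]
    nlinarith [norm_nonneg (z - x)]
  have hABnull : volume (A ∩ B) = 0 := by
    have hiee : (inner ℝ e e : ℝ) = 1 := by
      rw [real_inner_self_eq_norm_sq, he1]; norm_num
    set W := LinearMap.ker ((innerSL ℝ e : EuclideanSpace ℝ (Fin d) →L[ℝ] ℝ).toLinearMap) with hW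
    have hWne : W ≠ ⊤ := by
      intro htop
      have : e ∈ W := htop ▸ Submodule.mem_top
      rw [hW, LinearMap.mem_ker] at this
      simp only [ContinuousLinearMap.coe_coe, innerSL_apply_apply] at this
      rw [hiee] at this; norm_num at this
    set t : ℝ := c + (inner ℝ e x : ℝ) with ht
    have hsub : A ∩ B ⊆ (fun z => z - t • e) ⁻¹' (W : Set (EuclideanSpace ℝ (Fin d))) := by
      rintro z ⟨⟨_, h2⟩, ⟨_, h4⟩⟩
      have h4' : (inner ℝ e (z - y) : ℝ) ≤ -c := by
        rw [inner_neg_left] at h4; linarith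
      have hxy : (inner ℝ e (y - x) : ℝ) = D := by
        rw [hev, real_inner_smul_right, hiee, mul_one]
      have h2e : (inner ℝ e z : ℝ) - (inner ℝ e x : ℝ) ≥ c := by
        rw [← inner_sub_right]; exact h2
      have h4e : (inner ℝ e z : ℝ) - (inner ℝ e y : ℝ) ≤ -c := by
        rw [← inner_sub_right]; exact h4'
      have hyx : (inner ℝ e y : ℝ) - (inner ℝ e x : ℝ) = D := by
        rw [← inner_sub_right]; exact hxy
      have heq : (inner ℝ e z : ℝ) = t := by rw [ht]; linarith
      simp only [Set.mem_preimage, SetLike.mem_coe, hW, LinearMap.mem_ker,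
        ContinuousLinearMap.coe_coe, innerSL_apply_apply]
      rw [inner_sub_right, real_inner_smul_right, hiee, mul_one, heq, sub_self]
    refine measure_mono_null hsub ?_
    have : (fun z : EuclideanSpace ℝ (Fin d) => z - t • e) = fun z => z + (-(t • e)) := by
      funext z; rw [sub_eq_add_neg]
    rw [this, measure_preimage_add_right volume (-(t • e)) _]
    exact Measure.addHaar_submodule volume W hWne
  have hBmeas : MeasurableSet B := by
    have hcont : Continuous fun z : EuclideanSpace ℝ (Fin d) => (inner ℝ (-e) (z - y) : ℝ) :=
      continuous_const.inner (continuous_id'.sub continuous_const)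
    exact ((isClosed_le ((continuous_id'.sub continuous_const).norm) continuous_const).inter
      (isClosed_le continuous_const hcont)).measurableSet
  have hunion : volume (A ∪ B) = volume A + volume B := by
    have h := measure_union_add_inter (μ := volume) A hBmeas
    rw [hABnull, add_zero] at h
    exact h
  have hA' : volume A = ENNReal.ofReal (w' ^ d) * capVolE d hd u₀ :=
    capSlice d hd u₀ w' hw' e x he1
  have hB' : volume B = ENNReal.ofReal (w' ^ d) * capVolE d hd u₀ :=
    capSlice d hd u₀ w' hw' (-e) y (by rw [norm_neg, he1])
  calc ENNReal.ofReal (w' ^ d) * capVolE d hd u₀ * 2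
      = volume A + volume B := by rw [hA', hB']; ring
    _ = volume (A ∪ B) := hunion.symm
    _ ≤ volume L := measure_mono (Set.union_subset hAL hBL)

lemma periodize (d : ℕ) (a : ℝ) (ha : 0 < a) (L : Set (Fin d → ℝ)) (hL : MeasurableSet L)
    (hdiam : ∀ u ∈ L, ∀ u' ∈ L, ∀ i, |u i - u' i| < a) :
    volume L ≤ volume {v : Fin d → ℝ | (∀ i, v i ∈ Set.Icc (0 : ℝ) a) ∧
      ∃ k : Fin d → ℤ, (fun i => v i + a * k i) ∈ L} := by
  classical
  set box : (Fin d → ℤ) → Set (Fin d → ℝ) :=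
    fun k => Set.pi Set.univ fun i => Set.Ico (a * k i) (a * (k i + 1)) with hbox
  have hboxmeas : ∀ k, MeasurableSet (box k) := fun k =>
    MeasurableSet.pi Set.countable_univ fun i _ => measurableSet_Ico
  set t : (Fin d → ℤ) → (Fin d → ℝ) := fun k i => a * k i with ht
  set Sk : (Fin d → ℤ) → Set (Fin d → ℝ) := fun k => (fun v => v + t k) ⁻¹' (L ∩ box k) with hSk
  have hSkmeas : ∀ k, MeasurableSet (Sk k) :=
    fun k => (measurable_add_const (t k)) (hL.inter (hboxmeas k))
  have hSkvol : ∀ k, volume (Sk k) = volume (L ∩ box k) :=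
    fun k => measure_preimage_add_right volume (t k) _
  have hcover : L ⊆ ⋃ k : Fin d → ℤ, L ∩ box k := by
    intro u hu
    refine Set.mem_iUnion.mpr ⟨fun i => ⌊u i / a⌋, hu, ?_⟩
    intro i _
    constructor
    · have h := Int.floor_le (u i / a)
      rw [le_div_iff₀ ha] at h
      linarith [h]
    · have h := Int.lt_floor_add_one (u i / a)
      rw [div_lt_iff₀ ha] at h
      push_cast
      linarith [h]
  have hdisj : Pairwise (Function.onFun Disjoint Sk) := by
    intro k k' hkk'
    rw [Function.onFun, Set.disjoint_left]
    rintro v ⟨hvL, _⟩ ⟨hvL', _⟩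
    obtain ⟨i, hi⟩ := Function.ne_iff.mp hkk'
    have h1 := hdiam _ hvL _ hvL' i
    have h2 : (v + t k) i - (v + t k') i = a * ((k i : ℝ) - k' i) := by
      simp [ht, Pi.add_apply]; ring
    rw [h2] at h1
    have h3 : (1 : ℝ) ≤ |(k i : ℝ) - k' i| := by
      have : (1 : ℤ) ≤ |k i - k' i| := Int.one_le_abs (sub_ne_zero.mpr hi)
      have h4 : ((1:ℤ):ℝ) ≤ ((|k i - k' i| : ℤ) : ℝ) := by exact_mod_cast this
      rw [Int.cast_abs] at h4
      push_cast at h4 ⊢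
      linarith
    rw [abs_mul, abs_of_pos ha] at h1
    nlinarith
  have hSksub : ∀ k, Sk k ⊆ {v : Fin d → ℝ | (∀ i, v i ∈ Set.Icc (0 : ℝ) a) ∧
      ∃ k : Fin d → ℤ, (fun i => v i + a * k i) ∈ L} := by
    intro k v hv
    obtain ⟨hvL, hvbox⟩ := hv
    constructor
    · intro i
      have := hvbox i (Set.mem_univ i)
      obtain ⟨hlo, hhi⟩ := this
      simp only [Pi.add_apply, ht] at hlo hhi
      constructor
      · linarith
      · nlinarith
    · exact ⟨k, hvL⟩
  calc volume L ≤ volume (⋃ k : Fin d → ℤ, L ∩ box k) := measure_mono hcover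
    _ ≤ ∑' k : Fin d → ℤ, volume (L ∩ box k) := measure_iUnion_le _
    _ = ∑' k : Fin d → ℤ, volume (Sk k) := by simp_rw [hSkvol]
    _ = volume (⋃ k, Sk k) := (measure_iUnion hdisj hSkmeas).symm
    _ ≤ _ := measure_mono (Set.iUnion_subset hSksub)

lemma vol_transfer (d : ℕ) (s : Set (Fin d → ℝ)) (hs : MeasurableSet s) :
    volume ((MeasurableEquiv.toLp 2 (Fin d → ℝ)).symm ⁻¹' s) = volume s :=
  (EuclideanSpace.volume_preserving_symm_measurableEquiv_toLp (Fin d)).measure_preimage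
    hs.nullMeasurableSet


/-- With `w' = w − δ√d/2` and `‖x − y‖₂ ≤ 1 + δ√d`, for a uniform offset `v ∈ [0, 3w]^d`, the
probability that some `u ∈ v + 3w·ℤ^d` satisfies `x, y ∈ Ball(u, w')` is at least
`2 · V_d · (w'/(3w))^d · I_d((1 + δ√d)/(2w'))`. -/
theorem prob_close_pair_covered (d : ℕ) (hd : 1 ≤ d) (w δ w' : ℝ) (hw : 0 < w) (hδ : 0 < δ)
    (hw'def : w' = w - δ * Real.sqrt d / 2) (hw' : 0 < w')
    (h1 : 1 + δ * Real.sqrt d ≤ 2 * w') (h2 : 2 * w' < 3 * w)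
    (x y : Fin d → ℝ) (hxy : Real.sqrt (∑ i, (x i - y i) ^ 2) ≤ 1 + δ * Real.sqrt d) :
    2 * unitBallVol d * (w' / (3 * w)) ^ d *
        (capVol d (by omega) ((1 + δ * Real.sqrt d) / (2 * w')) / unitBallVol d)
      ≤ (volume {v : Fin d → ℝ | (∀ i, v i ∈ Set.Icc (0 : ℝ) (3 * w)) ∧
          ∃ k : Fin d → ℤ,
            Real.sqrt (∑ i, (x i - (v i + 3 * w * (k i))) ^ 2) ≤ w' ∧
            Real.sqrt (∑ i, (y i - (v i + 3 * w * (k i))) ^ 2) ≤ w'}).toReal / (3 * w) ^ d := by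

  have hd0 : 0 < d := hd
  set u₀ : ℝ := (1 + δ * Real.sqrt d) / (2 * w') with hu₀
  set a : ℝ := 3 * w with hadef
  have ha : 0 < a := by positivity
  set xE : EuclideanSpace ℝ (Fin d) := (WithLp.equiv 2 (Fin d → ℝ)).symm x with hxE
  set yE : EuclideanSpace ℝ (Fin d) := (WithLp.equiv 2 (Fin d → ℝ)).symm y with hyE
  have hnorm : ∀ (p : Fin d → ℝ) (z : EuclideanSpace ℝ (Fin d)),
      ‖z - (WithLp.equiv 2 (Fin d → ℝ)).symm p‖ = Real.sqrt (∑ i, (p i - z i) ^ 2) := by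
    intro p z
    rw [EuclideanSpace.norm_eq]
    congr 1
    apply Finset.sum_congr rfl
    intro i _
    have : (z - (WithLp.equiv 2 (Fin d → ℝ)).symm p) i = z i - p i := rfl
    rw [this, Real.norm_eq_abs, sq_abs]
    ring
  set Lpi : Set (Fin d → ℝ) :=
    {u | Real.sqrt (∑ i, (x i - u i) ^ 2) ≤ w' ∧ Real.sqrt (∑ i, (y i - u i) ^ 2) ≤ w'}
    with hLpi
  have habs : ∀ (p u : Fin d → ℝ), Real.sqrt (∑ i, (p i - u i) ^ 2) ≤ w' →
      ∀ i, |p i - u i| ≤ w' := by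
    intro p u h i
    have h1' : (p i - u i) ^ 2 ≤ ∑ j, (p j - u j) ^ 2 :=
      Finset.single_le_sum (f := fun j => (p j - u j) ^ 2) (fun j _ => sq_nonneg _)
        (Finset.mem_univ i)
    have h2' := Real.sqrt_le_sqrt h1'
    rw [Real.sqrt_sq_eq_abs] at h2'
    exact h2'.trans h
  have hcontsum : ∀ p : Fin d → ℝ,
      Continuous fun u : Fin d → ℝ => Real.sqrt (∑ i, (p i - u i) ^ 2) := fun p =>
    Real.continuous_sqrt.comp (continuous_finset_sum _ fun i _ =>
      (continuous_const.sub (continuous_apply i)).pow 2)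
  have hLmeas : MeasurableSet Lpi :=
    ((isClosed_le (hcontsum x) continuous_const).inter
      (isClosed_le (hcontsum y) continuous_const)).measurableSet
  have hdiam : ∀ u ∈ Lpi, ∀ u' ∈ Lpi, ∀ i, |u i - u' i| < a := by
    rintro u ⟨hu, _⟩ u' ⟨hu', _⟩ i
    have h1' := habs x u hu i
    have h2' := habs x u' hu' i
    calc |u i - u' i| ≤ |u i - x i| + |x i - u' i| := abs_sub_le _ _ _
      _ = |x i - u i| + |x i - u' i| := by rw [abs_sub_comm (u i) (x i)]
      _ ≤ w' + w' := add_le_add h1' h2'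
      _ < a := by rw [hadef]; linarith
  have hper := periodize d a ha Lpi hLmeas hdiam
  have hLE : (MeasurableEquiv.toLp 2 (Fin d → ℝ)).symm ⁻¹' Lpi
      = {z : EuclideanSpace ℝ (Fin d) | ‖z - xE‖ ≤ w' ∧ ‖z - yE‖ ≤ w'} := by
    ext z
    simp only [Set.mem_preimage, Set.mem_setOf_eq, hLpi, hxE, hyE, hnorm x z, hnorm y z]
    exact Iff.rfl
  have hDxy : ‖yE - xE‖ ≤ 2 * (w' * u₀) := by
    have heq : ‖yE - xE‖ = Real.sqrt (∑ i, (x i - y i) ^ 2) := hnorm x yE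
    rw [heq]
    have h2c : 2 * (w' * u₀) = 1 + δ * Real.sqrt d := by
      rw [hu₀]; field_simp
    rw [h2c]; exact hxy
  have hlens := lensVol d hd0 u₀ w' hw' xE yE hDxy
  have hLvol : volume Lpi
      = volume {z : EuclideanSpace ℝ (Fin d) | ‖z - xE‖ ≤ w' ∧ ‖z - yE‖ ≤ w'} := by
    rw [← vol_transfer d Lpi hLmeas, hLE]
  set Sthm : Set (Fin d → ℝ) := {v : Fin d → ℝ | (∀ i, v i ∈ Set.Icc (0 : ℝ) a) ∧
      ∃ k : Fin d → ℤ,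
        Real.sqrt (∑ i, (x i - (v i + a * (k i))) ^ 2) ≤ w' ∧
        Real.sqrt (∑ i, (y i - (v i + a * (k i))) ^ 2) ≤ w'} with hSthm
  have hSeq : {v : Fin d → ℝ | (∀ i, v i ∈ Set.Icc (0 : ℝ) a) ∧
      ∃ k : Fin d → ℤ, (fun i => v i + a * k i) ∈ Lpi} = Sthm := rfl
  rw [hSeq] at hper
  have hkey : ENNReal.ofReal (w' ^ d) * capVolE d hd0 u₀ * 2 ≤ volume Sthm := by
    calc ENNReal.ofReal (w' ^ d) * capVolE d hd0 u₀ * 2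
        ≤ volume {z : EuclideanSpace ℝ (Fin d) | ‖z - xE‖ ≤ w' ∧ ‖z - yE‖ ≤ w'} := hlens
      _ = volume Lpi := hLvol.symm
      _ ≤ volume Sthm := hper
  -- finiteness of the event set's volume
  have hSsub : Sthm ⊆ Set.pi Set.univ (fun _ : Fin d => Set.Icc (0:ℝ) a) :=
    fun v hv i _ => hv.1 i
  have hSfin : volume Sthm ≠ ⊤ := by
    refine ne_top_of_le_ne_top ?_ (measure_mono hSsub)
    rw [volume_pi_pi]
    simp only [Real.volume_Icc, sub_zero]
    rw [Finset.prod_const]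
    exact ENNReal.pow_ne_top ENNReal.ofReal_ne_top
  -- transfer of cap and ball volumes
  have hcapmeas : MeasurableSet
      {z : Fin d → ℝ | Real.sqrt (∑ i, (z i) ^ 2) ≤ 1 ∧ u₀ ≤ z ⟨0, hd0⟩} := by
    have c1 : Continuous fun z : Fin d → ℝ => Real.sqrt (∑ i, (z i) ^ 2) :=
      Real.continuous_sqrt.comp (continuous_finset_sum _ fun i _ => (continuous_apply i).pow 2)
    exact ((isClosed_le c1 continuous_const).inter
      (isClosed_le continuous_const (continuous_apply _))).measurableSet
  have hnorm0 : ∀ z : EuclideanSpace ℝ (Fin d), ‖z‖ = Real.sqrt (∑ i, (z i) ^ 2) := by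
    intro z
    rw [EuclideanSpace.norm_eq]
    congr 1
    exact Finset.sum_congr rfl fun i _ => by rw [Real.norm_eq_abs, sq_abs]
  have hcapE : capVolE d hd0 u₀
      = volume {z : Fin d → ℝ | Real.sqrt (∑ i, (z i) ^ 2) ≤ 1 ∧ u₀ ≤ z ⟨0, hd0⟩} := by
    rw [← vol_transfer d _ hcapmeas, capVolE]
    congr 1
    ext z
    simp only [Set.mem_preimage, Set.mem_setOf_eq, hnorm0 z]
    exact Iff.rfl
  have hballmeas : MeasurableSet {z : Fin d → ℝ | Real.sqrt (∑ i, (z i) ^ 2) ≤ 1} := by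
    have c1 : Continuous fun z : Fin d → ℝ => Real.sqrt (∑ i, (z i) ^ 2) :=
      Real.continuous_sqrt.comp (continuous_finset_sum _ fun i _ => (continuous_apply i).pow 2)
    exact (isClosed_le c1 continuous_const).measurableSet
  have hballE : volume {z : Fin d → ℝ | Real.sqrt (∑ i, (z i) ^ 2) ≤ 1}
      = volume (Metric.closedBall (0 : EuclideanSpace ℝ (Fin d)) 1) := by
    rw [← vol_transfer d _ hballmeas]
    congr 1
    ext z
    simp only [Set.mem_preimage, Set.mem_setOf_eq, Metric.mem_closedBall, dist_zero_right,
      hnorm0 z]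
    exact Iff.rfl
  have hballfin : volume (Metric.closedBall (0 : EuclideanSpace ℝ (Fin d)) 1) ≠ ⊤ :=
    (isCompact_closedBall _ _).measure_lt_top.ne
  have hballpos : 0 < volume (Metric.closedBall (0 : EuclideanSpace ℝ (Fin d)) 1) :=
    lt_of_lt_of_le (Metric.measure_ball_pos volume _ one_pos)
      (measure_mono Metric.ball_subset_closedBall)
  have hV : unitBallVol d
      = (volume (Metric.closedBall (0 : EuclideanSpace ℝ (Fin d)) 1)).toReal := by
    unfold unitBallVol; rw [hballE]
  have hVpos : 0 < unitBallVol d := by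
    rw [hV]; exact ENNReal.toReal_pos hballpos.ne' hballfin
  have hC : capVol d hd0 u₀ = (capVolE d hd0 u₀).toReal := by
    unfold capVol; rw [hcapE]
  have hcapfin : capVolE d hd0 u₀ ≠ ⊤ := by
    refine ne_top_of_le_ne_top hballfin (measure_mono ?_)
    rintro z ⟨hz, _⟩
    exact Metric.mem_closedBall.mpr (by rwa [dist_zero_right])
  have hCnn : 0 ≤ capVol d hd0 u₀ := ENNReal.toReal_nonneg
  have hreal : w' ^ d * capVol d hd0 u₀ * 2 ≤ (volume Sthm).toReal := by
    have h := ENNReal.toReal_mono hSfin hkey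
    rw [ENNReal.toReal_mul, ENNReal.toReal_mul,
      ENNReal.toReal_ofReal (pow_nonneg hw'.le d)] at h
    rw [hC]
    simpa using h
  have hVne : unitBallVol d ≠ 0 := hVpos.ne'
  have hane : a ^ d ≠ 0 := by positivity
  have halg : 2 * unitBallVol d * (w' / a) ^ d * (capVol d hd0 u₀ / unitBallVol d)
      = (w' ^ d * capVol d hd0 u₀ * 2) / a ^ d := by
    rw [div_pow]; field_simp
  have final : 2 * unitBallVol d * (w' / a) ^ d * (capVol d hd0 u₀ / unitBallVol d)
      ≤ (volume Sthm).toReal / a ^ d := by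
    rw [halg]
    gcongr
  exact final
end

section
/- Let d ≥ 1 be an integer, w > 0, t ≥ 0, and let x, y ∈ ℝ^d satisfy ‖x − y‖₂ ≥ t. If an offset v is sampled uniformly from the cube [0, 3w]^d, then the probability that there exists u ∈ v + 3w·ℤ^d with both x, y ∈ Ball(u, w) is at most V_d · 3^{−d} · exp(−(d/2) · t²/(4w²)). -/
open MeasureTheory

set_option maxHeartbeats 1000000 in
/-- If `‖x − y‖₂ ≥ t` and the offset `v` is sampled uniformly from `[0, 3w]^d`, then the
probability that some `u ∈ v + 3w·ℤ^d` satisfies `x, y ∈ Ball(u, w)` is at most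
`V_d · 3^{−d} · exp(−(d/2) · t²/(4w²))`. -/
theorem prob_distant_pair_covered (d : ℕ) (hd : 1 ≤ d) (w t : ℝ) (hw : 0 < w) (ht : 0 ≤ t)
    (x y : Fin d → ℝ) (hxy : t ≤ Real.sqrt (∑ i, (x i - y i) ^ 2)) :
    (volume {v : Fin d → ℝ | (∀ i, v i ∈ Set.Icc (0 : ℝ) (3 * w)) ∧
        ∃ k : Fin d → ℤ,
          Real.sqrt (∑ i, (x i - (v i + 3 * w * (k i))) ^ 2) ≤ w ∧
          Real.sqrt (∑ i, (y i - (v i + 3 * w * (k i))) ^ 2) ≤ w}).toReal / (3 * w) ^ d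
      ≤ unitBallVol d * ((1 : ℝ) / 3) ^ d *
          Real.exp (-((d : ℝ) / 2) * (t ^ 2 / (4 * w ^ 2))) := by
  have h3w : (0:ℝ) < 3 * w := by linarith
  have hw' : w ≠ 0 := ne_of_gt hw
  -- basic objects
  set U₁ : Set (Fin d → ℝ) := {z | Real.sqrt (∑ i, (z i) ^ 2) ≤ 1} with hU₁
  set B : Set (Fin d → ℝ) :=
    {z | Real.sqrt (∑ i, (x i - z i) ^ 2) ≤ w ∧ Real.sqrt (∑ i, (y i - z i) ^ 2) ≤ w} with hB
  set m : Fin d → ℝ := fun i => (x i + y i) / 2 with hm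
  set A : ℝ := w ^ 2 - (∑ i, (x i - y i) ^ 2) / 4 with hA
  set r : ℝ := Real.sqrt A with hr
  set c : (Fin d → ℤ) → (Fin d → ℝ) := fun k i => 3 * w * (k i) with hc
  set QIco : Set (Fin d → ℝ) := Set.pi Set.univ fun _ => Set.Ico (0:ℝ) (3*w) with hQIco
  set QIcc : Set (Fin d → ℝ) := Set.pi Set.univ fun _ => Set.Icc (0:ℝ) (3*w) with hQIcc
  set P : (Fin d → ℤ) → Set (Fin d → ℝ) := fun k => (fun v => v - c k) ⁻¹' QIco with hP
  have hBmeas : MeasurableSet B := by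
    rw [hB, Set.setOf_and]
    exact (measurableSet_le (by fun_prop) measurable_const).inter
      (measurableSet_le (by fun_prop) measurable_const)
  have hQIcoMeas : MeasurableSet QIco := MeasurableSet.univ_pi (fun _ => measurableSet_Ico)
  have hPmeas : ∀ k, MeasurableSet (P k) := fun k => hQIcoMeas.preimage (by fun_prop)
  -- the tiles P k are pairwise disjoint and cover everything
  have hPdisj : Pairwise (Function.onFun Disjoint fun k => P k ∩ B) := by
    intro k k' hkk'
    rw [Function.onFun, Set.disjoint_left]
    rintro v ⟨hv1, -⟩ ⟨hv2, -⟩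
    apply hkk'
    funext i
    have h1 := hv1 i (Set.mem_univ i)
    have h2 := hv2 i (Set.mem_univ i)
    simp only [hc, Set.mem_Ico, Pi.sub_apply] at h1 h2
    have hub : 3*w*((k i:ℝ) - (k' i)) < 3*w := by nlinarith [h1.1, h1.2, h2.1, h2.2]
    have hlb : 3*w*(-1:ℝ) < 3*w*((k i:ℝ) - (k' i)) := by nlinarith [h1.1, h1.2, h2.1, h2.2]
    have habs : |((k i : ℝ) - (k' i : ℝ))| < 1 := by
      rw [abs_lt]
      exact ⟨lt_of_mul_lt_mul_left hlb h3w.le,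
        (mul_lt_iff_lt_one_right h3w).1 hub⟩
    have habs2 : |k i - k' i| < 1 := by
      rw [← Int.cast_sub] at habs
      exact_mod_cast (by exact_mod_cast habs : |((k i - k' i : ℤ) : ℝ)| < 1)
    rw [abs_lt] at habs2
    omega
  have hPcover : (⋃ k, P k) = Set.univ := by
    apply Set.eq_univ_of_forall
    intro v
    refine Set.mem_iUnion.2 ⟨fun i => ⌊v i / (3*w)⌋, ?_⟩
    intro i _
    simp only [Pi.sub_apply, Set.mem_Ico, hc]
    have hfr1 := Int.fract_nonneg (v i / (3*w))
    have hfr2 := Int.fract_lt_one (v i / (3*w))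
    have hid : v i - 3 * w * ⌊v i / (3*w)⌋ = 3 * w * Int.fract (v i / (3*w)) := by
      rw [Int.fract]
      field_simp
    constructor
    · rw [hid]; positivity
    · rw [hid]; nlinarith
  -- step 1: measure of the event is at most measure of B
  have step1 : volume {v : Fin d → ℝ | (∀ i, v i ∈ Set.Icc (0 : ℝ) (3 * w)) ∧
        ∃ k : Fin d → ℤ,
          Real.sqrt (∑ i, (x i - (v i + 3 * w * (k i))) ^ 2) ≤ w ∧
          Real.sqrt (∑ i, (y i - (v i + 3 * w * (k i))) ^ 2) ≤ w} ≤ volume B := by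
    have hsub : {v : Fin d → ℝ | (∀ i, v i ∈ Set.Icc (0 : ℝ) (3 * w)) ∧
        ∃ k : Fin d → ℤ,
          Real.sqrt (∑ i, (x i - (v i + 3 * w * (k i))) ^ 2) ≤ w ∧
          Real.sqrt (∑ i, (y i - (v i + 3 * w * (k i))) ^ 2) ≤ w}
        ⊆ (⋃ k, QIco ∩ ((fun v => v + c k) ⁻¹' B)) ∪ (QIcc \ QIco) := by
      rintro v ⟨hv1, k, hk1, hk2⟩
      by_cases hvQ : v ∈ QIco
      · left
        refine Set.mem_iUnion.2 ⟨k, hvQ, ?_⟩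
        exact ⟨hk1, hk2⟩
      · right
        exact ⟨fun i _ => hv1 i, hvQ⟩
    have hnull : volume (QIcc \ QIco) = 0 := by
      have hsub2 : QIco ⊆ QIcc := fun v hv i hi => Set.Ico_subset_Icc_self (hv i hi)
      have hfin : volume QIco ≠ ⊤ := by
        rw [hQIco, volume_pi_pi]
        simp [Real.volume_Ico]
        exact fun h => absurd h (ENNReal.mul_ne_top (by simp) ENNReal.ofReal_ne_top)
      rw [measure_diff hsub2 hQIcoMeas.nullMeasurableSet hfin]
      rw [hQIco, hQIcc, volume_pi_pi, volume_pi_pi]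
      simp [Real.volume_Ico, Real.volume_Icc]
    calc volume _ ≤ volume ((⋃ k, QIco ∩ ((fun v => v + c k) ⁻¹' B)) ∪ (QIcc \ QIco)) :=
          measure_mono hsub
      _ ≤ volume (⋃ k, QIco ∩ ((fun v => v + c k) ⁻¹' B)) + volume (QIcc \ QIco) :=
          measure_union_le _ _
      _ = volume (⋃ k, QIco ∩ ((fun v => v + c k) ⁻¹' B)) := by rw [hnull, add_zero]
      _ ≤ ∑' k, volume (QIco ∩ ((fun v => v + c k) ⁻¹' B)) := measure_iUnion_le _
      _ = ∑' k, volume (P k ∩ B) := by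
          refine tsum_congr fun k => ?_
          have heq : QIco ∩ ((fun v => v + c k) ⁻¹' B) = (fun v => v + c k) ⁻¹' (P k ∩ B) := by
            ext v
            simp only [Set.mem_inter_iff, Set.mem_preimage, hP, Pi.sub_apply, add_sub_cancel_right]
          rw [heq, measure_preimage_add_right]
      _ = volume (⋃ k, P k ∩ B) :=
          (measure_iUnion hPdisj (fun k => (hPmeas k).inter hBmeas)).symm
      _ = volume B := by rw [← Set.iUnion_inter, hPcover, Set.univ_inter]
  -- step 2: B is contained in a ball of radius r around m
  have hmem_sq : ∀ z ∈ B, ∑ i, (z i - m i)^2 ≤ A := by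
    rintro z ⟨hz1, hz2⟩
    have hSx : ∑ i, (x i - z i)^2 ≤ w^2 := by
      have h0 : (0:ℝ) ≤ ∑ i, (x i - z i)^2 := Finset.sum_nonneg fun i _ => sq_nonneg _
      nlinarith [Real.sq_sqrt h0, Real.sqrt_nonneg (∑ i, (x i - z i)^2)]
    have hSy : ∑ i, (y i - z i)^2 ≤ w^2 := by
      have h0 : (0:ℝ) ≤ ∑ i, (y i - z i)^2 := Finset.sum_nonneg fun i _ => sq_nonneg _
      nlinarith [Real.sq_sqrt h0, Real.sqrt_nonneg (∑ i, (y i - z i)^2)]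
    have hident : ∑ i, (z i - m i)^2
        = (∑ i, (x i - z i)^2)/2 + (∑ i, (y i - z i)^2)/2 - (∑ i, (x i - y i)^2)/4 := by
      rw [Finset.sum_congr rfl (fun i _ => show (z i - m i)^2
          = (x i - z i)^2/2 + (y i - z i)^2/2 - (x i - y i)^2/4 by rw [hm]; ring)]
      rw [Finset.sum_sub_distrib, Finset.sum_add_distrib, ← Finset.sum_div, ← Finset.sum_div,
        ← Finset.sum_div]
    rw [hident, hA]
    linarith
  -- step 3: measure of B is at most ofReal (r^d) * volume U₁
  have step2 : volume B ≤ ENNReal.ofReal (r ^ d) * volume U₁ := by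
    rcases le_or_gt A 0 with hA0 | hA0
    · -- B ⊆ {m}, measure zero
      have : B ⊆ {m} := by
        intro z hz
        have h1 := hmem_sq z hz
        have h2 : ∀ i ∈ Finset.univ, (z i - m i)^2 = 0 := by
          intro i _
          have hle : ∑ j, (z j - m j)^2 ≤ 0 := le_trans h1 hA0
          have : (z i - m i)^2 ≤ 0 := le_trans (Finset.single_le_sum
            (fun j _ => sq_nonneg (z j - m j)) (Finset.mem_univ i)) hle
          nlinarith [sq_nonneg (z i - m i)]
        have : z = m := by
          funext i
          have := h2 i (Finset.mem_univ i)
          nlinarith [this]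
        simp [this]
      have hsing : volume ({m} : Set (Fin d → ℝ)) = 0 := by
        rw [show ({m} : Set (Fin d → ℝ)) = Set.pi Set.univ (fun i => {m i}) from
          (Set.univ_pi_singleton m).symm, volume_pi_pi]
        simp only [Real.volume_singleton, Finset.prod_const, Finset.card_univ, Fintype.card_fin]
        exact zero_pow (by omega)
      calc volume B ≤ volume {m} := measure_mono this
        _ = 0 := hsing
        _ ≤ _ := zero_le
    · -- B ⊆ preimage of U₁ under z ↦ r⁻¹ • (z - m)
      have hrpos : 0 < r := Real.sqrt_pos.2 hA0
      have hr2 : r^2 = A := Real.sq_sqrt hA0.le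
      have hsub : B ⊆ (fun z : Fin d → ℝ => r⁻¹ • (z - m)) ⁻¹' U₁ := by
        intro z hz
        simp only [Set.mem_preimage, hU₁, Set.mem_setOf_eq]
        have hkey : ∑ i, ((r⁻¹ • (z - m)) i)^2 ≤ 1 := by
          have : ∀ i, ((r⁻¹ • (z - m)) i)^2 = r⁻¹^2 * (z i - m i)^2 := by
            intro i; simp [mul_pow]
          rw [Finset.sum_congr rfl (fun i _ => this i), ← Finset.mul_sum]
          rw [inv_pow, inv_mul_le_iff₀ (by positivity), mul_one, hr2]
          exact hmem_sq z hz
        calc Real.sqrt (∑ i, ((r⁻¹ • (z - m)) i)^2) ≤ Real.sqrt 1 := Real.sqrt_le_sqrt hkey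
          _ = 1 := Real.sqrt_one
      calc volume B ≤ volume ((fun z : Fin d → ℝ => r⁻¹ • (z - m)) ⁻¹' U₁) := measure_mono hsub
        _ = ENNReal.ofReal (r ^ d) * volume U₁ := by
          have hcomp : (fun z : Fin d → ℝ => r⁻¹ • (z - m))
              = (fun z : Fin d → ℝ => r⁻¹ • z) ∘ (fun z => z + (-m)) := by
            funext z; simp [sub_eq_add_neg]
          rw [hcomp, Set.preimage_comp, measure_preimage_add_right,
            Measure.addHaar_preimage_smul volume (inv_ne_zero hrpos.ne')]
          congr 1
          rw [Module.finrank_pi]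
          simp only [Fintype.card_fin]
          rw [inv_pow, inv_inv, abs_of_nonneg (by positivity)]
  -- finiteness of unit ball volume
  have hU1fin : volume U₁ ≠ ⊤ := by
    have hsub : U₁ ⊆ Set.pi Set.univ fun _ : Fin d => Set.Icc (-1:ℝ) 1 := by
      intro z hz i _
      simp only [hU₁, Set.mem_setOf_eq] at hz
      have hS0 : (0:ℝ) ≤ ∑ j, (z j)^2 := Finset.sum_nonneg fun j _ => sq_nonneg _
      have hS1 : ∑ j, (z j)^2 ≤ 1 := by
        nlinarith [Real.sq_sqrt hS0, Real.sqrt_nonneg (∑ j, (z j)^2)]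
      have : (z i)^2 ≤ 1 := le_trans (Finset.single_le_sum
        (fun j _ => sq_nonneg (z j)) (Finset.mem_univ i)) hS1
      constructor <;> nlinarith
    have : volume (Set.pi Set.univ fun _ : Fin d => Set.Icc (-1:ℝ) 1) ≠ ⊤ := by
      rw [volume_pi_pi]; simp [Real.volume_Icc]
    exact fun h => this (top_le_iff.1 (h ▸ measure_mono hsub))
  -- convert to real
  have hVnonneg : 0 ≤ unitBallVol d := ENNReal.toReal_nonneg
  have htoReal : (volume {v : Fin d → ℝ | (∀ i, v i ∈ Set.Icc (0 : ℝ) (3 * w)) ∧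
        ∃ k : Fin d → ℤ,
          Real.sqrt (∑ i, (x i - (v i + 3 * w * (k i))) ^ 2) ≤ w ∧
          Real.sqrt (∑ i, (y i - (v i + 3 * w * (k i))) ^ 2) ≤ w}).toReal
      ≤ r ^ d * unitBallVol d := by
    have hfin : ENNReal.ofReal (r ^ d) * volume U₁ ≠ ⊤ :=
      ENNReal.mul_ne_top ENNReal.ofReal_ne_top hU1fin
    have := ENNReal.toReal_mono hfin (le_trans step1 step2)
    rwa [ENNReal.toReal_mul, ENNReal.toReal_ofReal (by positivity)] at this
  -- the exponential bound on r
  have hrkey : r ≤ w * Real.exp (-(t^2/(8*w^2))) := by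
    have hSxy : t^2 ≤ ∑ i, (x i - y i)^2 := by
      have h0 : (0:ℝ) ≤ ∑ i, (x i - y i)^2 := Finset.sum_nonneg fun i _ => sq_nonneg _
      nlinarith [Real.sq_sqrt h0]
    have hAle : A ≤ w^2 * (1 - t^2/(4*w^2)) := by
      rw [hA]
      have : w^2 * (1 - t^2/(4*w^2)) = w^2 - t^2/4 := by field_simp
      rw [this]; linarith
    have hexp : 1 - t^2/(4*w^2) ≤ Real.exp (-(t^2/(4*w^2))) := by
      have := Real.add_one_le_exp (-(t^2/(4*w^2)))
      linarith
    have hsq : w^2 * Real.exp (-(t^2/(4*w^2))) = (w * Real.exp (-(t^2/(8*w^2))))^2 := by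
      have hee : Real.exp (-(t^2/(8*w^2)))^2 = Real.exp (-(t^2/(4*w^2))) := by
        rw [sq, ← Real.exp_add]
        congr 1
        field_simp
        ring
      rw [mul_pow, hee]
    have hAle2 : A ≤ (w * Real.exp (-(t^2/(8*w^2))))^2 := by
      rw [← hsq]
      calc A ≤ w^2 * (1 - t^2/(4*w^2)) := hAle
        _ ≤ w^2 * Real.exp (-(t^2/(4*w^2))) := by nlinarith [sq_nonneg w]
    calc r = Real.sqrt A := hr
      _ ≤ Real.sqrt ((w * Real.exp (-(t^2/(8*w^2))))^2) := Real.sqrt_le_sqrt hAle2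
      _ = w * Real.exp (-(t^2/(8*w^2))) := Real.sqrt_sq (by positivity)
  have hrpow : r ^ d ≤ w ^ d * Real.exp (-((d : ℝ) / 2) * (t ^ 2 / (4 * w ^ 2))) := by
    calc r ^ d ≤ (w * Real.exp (-(t^2/(8*w^2))))^d :=
          pow_le_pow_left₀ (Real.sqrt_nonneg A) hrkey d
      _ = w ^ d * Real.exp (-(t^2/(8*w^2)))^d := mul_pow _ _ _
      _ = w ^ d * Real.exp (-((d : ℝ) / 2) * (t ^ 2 / (4 * w ^ 2))) := by
          rw [← Real.exp_nat_mul]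
          congr 1
          rw [show (8:ℝ)*w^2 = 2*(4*w^2) by ring, ← div_div]
          ring
  -- conclude
  calc _ ≤ (r ^ d * unitBallVol d) / (3*w)^d := by
        exact (div_le_div_iff_of_pos_right (by positivity)).2 htoReal
      _ ≤ (w ^ d * Real.exp (-((d : ℝ) / 2) * (t ^ 2 / (4 * w ^ 2))) * unitBallVol d) / (3*w)^d := by
        refine (div_le_div_iff_of_pos_right (by positivity)).2 ?_
        have he := Real.exp_pos (-((d : ℝ) / 2) * (t ^ 2 / (4 * w ^ 2)))
        nlinarith [hrpow, hVnonneg, pow_nonneg (Real.sqrt_nonneg A) d]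
      _ = unitBallVol d * ((1 : ℝ) / 3) ^ d * Real.exp (-((d : ℝ) / 2) * (t ^ 2 / (4 * w ^ 2))) := by
        rw [mul_pow]
        field_simp
        rw [mul_assoc, ← mul_pow]; norm_num
end

section
/- Let d' divide d with d' ≥ 16, set ε := 4/√d', let h be a 2-wise independent random permutation of [d], and let σ be 4-wise independent uniform random signs on [d], with h and σ independent of each other. Then for every x ∈ ℝ^d with ‖x‖₂ = 1, ℙ( |√(d/d') · ‖A_{h,σ} x‖₂ − 1| > ε ) < 1/2. -/
open MeasureTheory

/-- `‖A_{h,σ} x‖₂²` for the modified CountSketch matrix `A_{h,σ}` with blocks of size `d/d'`: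
`(A_{h,σ} x)_r = √(d'/d) · ∑_{i : h(i) ∈ B_r} σ(i)·x_i`, where `B_r` is the `r`-th consecutive
block of `[d]` of size `d/d'` (the block index of `a : Fin d` is `a.val / (d/d')`). -/
noncomputable def sketchNormSq (d d' : ℕ) (π : Equiv.Perm (Fin d)) (s : Fin d → ℝ)
    (x : Fin d → ℝ) : ℝ :=
  ∑ r : Fin d',
    (Real.sqrt ((d' : ℝ) / (d : ℝ)) *
      ∑ i ∈ Finset.univ.filter (fun i : Fin d => (π i).val / (d / d') = (r : ℕ)),
        s i * x i) ^ 2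


open Finset

lemma partition_toReal {Ω : Type*} [MeasurableSpace Ω] (μ : Measure Ω) [IsProbabilityMeasure μ]
    {ι : Type*} [Fintype ι] [DecidableEq ι] (c : Ω → ι)
    (hmeas : ∀ i, MeasurableSet {ω | c ω = i}) (P : ι → Prop) [DecidablePred P] :
    (μ {ω | P (c ω)}).toReal = ∑ i ∈ Finset.univ.filter P, (μ {ω | c ω = i}).toReal := by
  have hset : {ω | P (c ω)} = ⋃ i ∈ Finset.univ.filter P, {ω | c ω = i} := by
    ext ω
    simp only [Set.mem_setOf_eq, Set.mem_iUnion, Finset.mem_filter, Finset.mem_univ, true_and]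
    constructor
    · intro hP; exact ⟨c ω, hP, rfl⟩
    · rintro ⟨i, hP, hci⟩; rwa [hci]
  have hdisj : (↑(Finset.univ.filter P) : Set ι).PairwiseDisjoint
      (fun i => {ω | c ω = i}) := by
    intro i _ j _ hij
    refine Set.disjoint_left.mpr fun ω h1 h2 => hij ?_
    rw [← h1, ← h2]
  rw [hset, measure_biUnion_finset hdisj (fun i _ => hmeas i)]
  exact ENNReal.toReal_sum fun i _ => measure_ne_top μ _


def sgn' (u : Bool) : ℝ := if u then 1 else -1

lemma sgn'_val (u : Bool) : sgn' u = 1 ∨ sgn' u = -1 := by cases u <;> simp [sgn']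
lemma sgn'_mul_self (u : Bool) : sgn' u * sgn' u = 1 := by cases u <;> norm_num [sgn']
lemma sgn'_inj {u v : Bool} (h : sgn' u = sgn' v) : u = v := by
  cases u <;> cases v <;> simp_all [sgn'] <;> norm_num at h

lemma sumr_fiber {d : ℕ} (r : (Fin d → Bool) → ℝ) (i1 i2 i3 i4 : Fin d)
    (hr : ∀ u1 u2 u3 u4 : Bool,
      ∑ b ∈ Finset.univ.filter
        (fun b : Fin d → Bool => b i1 = u1 ∧ b i2 = u2 ∧ b i3 = u3 ∧ b i4 = u4), r b = 1/16)
    (φ : Bool → Bool → Bool → Bool → ℝ) :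
    ∑ b : Fin d → Bool, r b * φ (b i1) (b i2) (b i3) (b i4)
      = (1/16) * ∑ u1 : Bool, ∑ u2 : Bool, ∑ u3 : Bool, ∑ u4 : Bool, φ u1 u2 u3 u4 := by
  classical
  have h := Finset.sum_fiberwise (Finset.univ : Finset (Fin d → Bool))
    (fun b => (b i1, b i2, b i3, b i4))
    (fun b => r b * φ (b i1) (b i2) (b i3) (b i4))
  rw [← h]
  rw [Fintype.sum_prod_type, Finset.mul_sum]
  refine Finset.sum_congr rfl fun u1 _ => ?_
  rw [Fintype.sum_prod_type, Finset.mul_sum]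
  refine Finset.sum_congr rfl fun u2 _ => ?_
  rw [Fintype.sum_prod_type, Finset.mul_sum]
  refine Finset.sum_congr rfl fun u3 _ => ?_
  rw [Finset.mul_sum]
  refine Finset.sum_congr rfl fun u4 _ => ?_
  have hfe : (Finset.univ.filter fun b : Fin d → Bool =>
        (b i1, b i2, b i3, b i4) = (u1, u2, u3, u4))
      = Finset.univ.filter (fun b => b i1 = u1 ∧ b i2 = u2 ∧ b i3 = u3 ∧ b i4 = u4) := by
    apply Finset.filter_congr; intro b _; simp [Prod.ext_iff]
  calc ∑ b ∈ Finset.univ.filter (fun b : Fin d → Bool =>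
        (b i1, b i2, b i3, b i4) = (u1, u2, u3, u4)),
        r b * φ (b i1) (b i2) (b i3) (b i4)
      = ∑ b ∈ Finset.univ.filter (fun b : Fin d → Bool =>
        (b i1, b i2, b i3, b i4) = (u1, u2, u3, u4)), r b * φ u1 u2 u3 u4 := by
        refine Finset.sum_congr rfl fun b hb => ?_
        simp only [Finset.mem_filter, Prod.ext_iff] at hb
        obtain ⟨-, h1, h2, h3, h4⟩ := hb
        rw [h1, h2, h3, h4]
    _ = (1/16) * φ u1 u2 u3 u4 := by
        rw [← Finset.sum_mul, hfe, hr u1 u2 u3 u4]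

lemma sum4_zero :
    ∑ u1 : Bool, ∑ u2 : Bool, ∑ u3 : Bool, ∑ u4 : Bool,
      sgn' u1 * sgn' u2 * (sgn' u3 * sgn' u4) = 0 := by
  simp [Fintype.sum_bool, sgn']

lemma sum2_zero :
    ∑ u1 : Bool, ∑ u2 : Bool, ∑ u3 : Bool, ∑ u4 : Bool,
      sgn' u1 * sgn' u2 = 0 := by
  simp [Fintype.sum_bool, sgn']

lemma sum0_one :
    ∑ u1 : Bool, ∑ u2 : Bool, ∑ u3 : Bool, ∑ u4 : Bool, (1:ℝ) = 16 := by
  simp [Fintype.sum_bool]; norm_num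

/-- abbreviation for the 4-wise fiber hypothesis on `r`. -/
def R4 {d : ℕ} (r : (Fin d → Bool) → ℝ) : Prop :=
  ∀ i1 i2 i3 i4 : Fin d, i1 ≠ i2 → i1 ≠ i3 → i1 ≠ i4 → i2 ≠ i3 → i2 ≠ i4 → i3 ≠ i4 →
    ∀ u1 u2 u3 u4 : Bool,
      ∑ b ∈ Finset.univ.filter
        (fun b : Fin d → Bool => b i1 = u1 ∧ b i2 = u2 ∧ b i3 = u3 ∧ b i4 = u4), r b = 1/16

lemma exists_two_other {d : ℕ} (hd : 4 ≤ d) (a c : Fin d) :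
    ∃ e f : Fin d, e ≠ f ∧ e ≠ a ∧ e ≠ c ∧ f ≠ a ∧ f ≠ c := by
  classical
  have hcard : ({a,c} : Finset (Fin d)).card ≤ 2 := by
    apply le_trans (Finset.card_insert_le a {c}); simp
  have h2 : 1 < (({a,c} : Finset (Fin d))ᶜ).card := by
    rw [Finset.card_compl]
    simp only [Fintype.card_fin]
    omega
  obtain ⟨e, he, f, hf, hef⟩ := Finset.one_lt_card.mp h2
  simp only [Finset.mem_compl, Finset.mem_insert, Finset.mem_singleton, not_or] at he hf
  exact ⟨e, f, hef, he.1, he.2, hf.1, hf.2⟩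

lemma sumr_pair {d : ℕ} (r : (Fin d → Bool) → ℝ) (hd : 4 ≤ d) (hr4 : R4 r)
    (a c : Fin d) (hac : a ≠ c) :
    ∑ b : Fin d → Bool, r b * (sgn' (b a) * sgn' (b c)) = 0 := by
  obtain ⟨e, f, hef, hea, hec, hfa, hfc⟩ := exists_two_other hd a c
  have := sumr_fiber r a c e f
    (hr4 a c e f hac hea.symm hfa.symm hec.symm hfc.symm hef)
    (fun u1 u2 _ _ => sgn' u1 * sgn' u2)
  rw [this, sum2_zero, mul_zero]

lemma sumr_four {d : ℕ} (r : (Fin d → Bool) → ℝ) (hr4 : R4 r)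
    (i j k l : Fin d) (hij : i ≠ j) (hik : i ≠ k) (hil : i ≠ l)
    (hjk : j ≠ k) (hjl : j ≠ l) (hkl : k ≠ l) :
    ∑ b : Fin d → Bool, r b * (sgn' (b i) * sgn' (b j) * (sgn' (b k) * sgn' (b l))) = 0 := by
  have := sumr_fiber r i j k l (hr4 i j k l hij hik hil hjk hjl hkl)
    (fun u1 u2 u3 u4 => sgn' u1 * sgn' u2 * (sgn' u3 * sgn' u4))
  rw [this, sum4_zero, mul_zero]

lemma sumr_cross {d : ℕ} (r : (Fin d → Bool) → ℝ) (hd : 4 ≤ d) (hr4 : R4 r)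
    (i j k l : Fin d) (hij : i ≠ j) (hkl : k ≠ l)
    (h1 : ¬(k = i ∧ l = j)) (h2 : ¬(k = j ∧ l = i)) :
    ∑ b : Fin d → Bool, r b * (sgn' (b i) * sgn' (b j) * (sgn' (b k) * sgn' (b l))) = 0 := by
  by_cases hki : k = i
  · subst hki
    have hlj : l ≠ j := fun hh => h1 ⟨rfl, hh⟩
    have heq : ∀ b : Fin d → Bool,
        r b * (sgn' (b k) * sgn' (b j) * (sgn' (b k) * sgn' (b l)))
          = r b * (sgn' (b j) * sgn' (b l)) := by
      intro b
      have hs := sgn'_mul_self (b k)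
      linear_combination (r b * (sgn' (b j) * sgn' (b l))) * hs
    rw [Finset.sum_congr rfl (fun b _ => heq b)]
    exact sumr_pair r hd hr4 j l (fun hh => hlj hh.symm)
  · by_cases hli : l = i
    · subst hli
      have hkj : k ≠ j := fun hh => h2 ⟨hh, rfl⟩
      have heq : ∀ b : Fin d → Bool,
          r b * (sgn' (b l) * sgn' (b j) * (sgn' (b k) * sgn' (b l)))
            = r b * (sgn' (b j) * sgn' (b k)) := by
        intro b
        have hs := sgn'_mul_self (b l)
        linear_combination (r b * (sgn' (b j) * sgn' (b k))) * hs
      rw [Finset.sum_congr rfl (fun b _ => heq b)]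
      exact sumr_pair r hd hr4 j k (fun hh => hkj hh.symm)
    · by_cases hkj : k = j
      · subst hkj
        have hli' : l ≠ i := hli
        have heq : ∀ b : Fin d → Bool,
            r b * (sgn' (b i) * sgn' (b k) * (sgn' (b k) * sgn' (b l)))
              = r b * (sgn' (b i) * sgn' (b l)) := by
          intro b
          have hs := sgn'_mul_self (b k)
          linear_combination (r b * (sgn' (b i) * sgn' (b l))) * hs
        rw [Finset.sum_congr rfl (fun b _ => heq b)]
        exact sumr_pair r hd hr4 i l (fun hh => hli' hh.symm)
      · by_cases hlj : l = j
        · subst hlj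
          have heq : ∀ b : Fin d → Bool,
              r b * (sgn' (b i) * sgn' (b l) * (sgn' (b k) * sgn' (b l)))
                = r b * (sgn' (b i) * sgn' (b k)) := by
            intro b
            have hs := sgn'_mul_self (b l)
            linear_combination (r b * (sgn' (b i) * sgn' (b k))) * hs
          rw [Finset.sum_congr rfl (fun b _ => heq b)]
          exact sumr_pair r hd hr4 i k (fun hh => hki hh.symm)
        · exact sumr_four r hr4 i j k l hij (fun hh => hki hh.symm) (fun hh => hli hh.symm)
            (fun hh => hkj hh.symm) (fun hh => hlj hh.symm) hkl

lemma card_sameblock_le (d m : ℕ) (hm : 0 < m) :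
    ((Finset.univ : Finset (Fin d × Fin d)).filter
      (fun y => y.1.val / m = y.2.val / m ∧ y.1 ≠ y.2)).card ≤ d * (m - 1) := by
  classical
  have hcard : ((Finset.univ : Finset (Fin d × Fin d)).filter
      (fun y => y.1.val / m = y.2.val / m ∧ y.1 ≠ y.2)).card
      = ∑ a : Fin d, (((Finset.univ : Finset (Fin d × Fin d)).filter
          (fun y => y.1.val / m = y.2.val / m ∧ y.1 ≠ y.2)).filter
          (fun y => y.1 = a)).card :=
    Finset.card_eq_sum_card_fiberwise (f := fun y : Fin d × Fin d => y.1)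
      (t := Finset.univ) (fun y _ => Finset.mem_univ _)
  rw [hcard]
  have hfib : ∀ a : Fin d, (((Finset.univ : Finset (Fin d × Fin d)).filter
      (fun y => y.1.val / m = y.2.val / m ∧ y.1 ≠ y.2)).filter
      (fun y => y.1 = a)).card ≤ m - 1 := by
    intro a
    have hle : (((Finset.univ : Finset (Fin d × Fin d)).filter
        (fun y => y.1.val / m = y.2.val / m ∧ y.1 ≠ y.2)).filter
        (fun y => y.1 = a)).card ≤ ((Finset.range m).erase (a.val % m)).card := by
      apply Finset.card_le_card_of_injOn (fun y => y.2.val % m)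
      · intro y hy
        simp only [Finset.mem_coe, Finset.mem_filter, Finset.mem_univ, true_and] at hy
        obtain ⟨⟨hblk, hne⟩, h1⟩ := hy
        refine Finset.mem_erase.mpr ⟨?_, Finset.mem_range.mpr (Nat.mod_lt _ hm)⟩
        intro hmod
        apply hne
        apply Fin.ext
        rw [← h1] at hmod
        have hmod' : y.2.val % m = y.1.val % m := hmod
        have hblk' : y.1.val / m = y.2.val / m := hblk
        calc y.1.val = m * (y.1.val / m) + y.1.val % m := (Nat.div_add_mod _ _).symm
          _ = m * (y.2.val / m) + y.2.val % m := by rw [hblk', hmod']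
          _ = y.2.val := Nat.div_add_mod _ _
      · intro y hy z hz hmod
        simp only [Finset.mem_coe, Finset.mem_filter, Finset.mem_univ, true_and] at hy hz
        obtain ⟨⟨hblky, _⟩, hy1⟩ := hy
        obtain ⟨⟨hblkz, _⟩, hz1⟩ := hz
        have hmod' : y.2.val % m = z.2.val % m := hmod
        have h2 : y.2 = z.2 := by
          apply Fin.ext
          rw [hy1] at hblky; rw [hz1] at hblkz
          have hblky' : a.val / m = y.2.val / m := hblky
          have hblkz' : a.val / m = z.2.val / m := hblkz
          calc y.2.val = m * (y.2.val / m) + y.2.val % m := (Nat.div_add_mod _ _).symm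
            _ = m * (z.2.val / m) + z.2.val % m := by rw [← hblky', hblkz', hmod']
            _ = z.2.val := Nat.div_add_mod _ _
        apply Prod.ext
        · rw [hy1, hz1]
        · exact h2
    calc _ ≤ ((Finset.range m).erase (a.val % m)).card := hle
      _ = m - 1 := by
          rw [Finset.card_erase_of_mem (Finset.mem_range.mpr (Nat.mod_lt _ hm)),
            Finset.card_range]
  calc ∑ a : Fin d, (((Finset.univ : Finset (Fin d × Fin d)).filter
        (fun y => y.1.val / m = y.2.val / m ∧ y.1 ≠ y.2)).filter
        (fun y => y.1 = a)).card ≤ ∑ _a : Fin d, (m-1) :=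
        Finset.sum_le_sum (fun a _ => hfib a)
    _ = d * (m-1) := by simp [Finset.sum_const, Finset.card_univ, mul_comm]

lemma sumq_delta (d d' m : ℕ) (hdm : d = d' * m) (hd16 : 16 ≤ d') (hm1 : 1 ≤ m)
    (q : Equiv.Perm (Fin d) → ℝ) (hq0 : ∀ π, 0 ≤ q π)
    (hq2 : ∀ i j a c : Fin d, i ≠ j → a ≠ c →
      ∑ π ∈ Finset.univ.filter (fun π : Equiv.Perm (Fin d) => π i = a ∧ π j = c), q π
        = 1/((d:ℝ)*((d:ℝ)-1)))
    (i j : Fin d) (hij : i ≠ j) :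
    ∑ π : Equiv.Perm (Fin d), q π * (if (π i).val / m = (π j).val / m then 1 else 0)
      ≤ 1/(d':ℝ) := by
  classical
  have hkey := Finset.sum_fiberwise (Finset.univ : Finset (Equiv.Perm (Fin d)))
    (fun π => ((π i), (π j)))
    (fun π => q π * (if (π i).val / m = (π j).val / m then 1 else 0))
  rw [← hkey]
  have hterm : ∀ p : Fin d × Fin d,
      (∑ π ∈ Finset.univ.filter (fun π : Equiv.Perm (Fin d) => ((π i), (π j)) = p),
        q π * (if (π i).val / m = (π j).val / m then 1 else 0))
      ≤ (if p.1.val / m = p.2.val / m ∧ p.1 ≠ p.2 then 1/((d:ℝ)*((d:ℝ)-1)) else 0) := by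
    intro p
    obtain ⟨a, c⟩ := p
    by_cases hblk : a.val / m = c.val / m
    · by_cases hac : a = c
      · have hempty : (Finset.univ.filter
            (fun π : Equiv.Perm (Fin d) => ((π i), (π j)) = (a, c))) = ∅ := by
          rw [Finset.filter_eq_empty_iff]
          intro π _
          subst hac
          intro hh
          rw [Prod.ext_iff] at hh
          exact hij (π.injective (hh.1.trans hh.2.symm))
        rw [hempty]
        simp [hac]
      · have heq1 : ∀ π ∈ Finset.univ.filter
            (fun π : Equiv.Perm (Fin d) => ((π i), (π j)) = (a, c)),
            q π * (if (π i).val / m = (π j).val / m then 1 else 0) = q π := by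
          intro π hπ
          simp only [Finset.mem_filter, Prod.ext_iff] at hπ
          obtain ⟨-, h1, h2⟩ := hπ
          rw [h1, h2, if_pos hblk, mul_one]
        rw [Finset.sum_congr rfl heq1]
        have hfe : (Finset.univ.filter
            (fun π : Equiv.Perm (Fin d) => ((π i), (π j)) = (a, c)))
            = Finset.univ.filter (fun π : Equiv.Perm (Fin d) => π i = a ∧ π j = c) := by
          apply Finset.filter_congr; intro π _; simp [Prod.ext_iff]
        rw [hfe, hq2 i j a c hij hac, if_pos ⟨hblk, hac⟩]
    · have hz : ∀ π ∈ Finset.univ.filter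
          (fun π : Equiv.Perm (Fin d) => ((π i), (π j)) = (a, c)),
          q π * (if (π i).val / m = (π j).val / m then 1 else 0) = 0 := by
        intro π hπ
        simp only [Finset.mem_filter, Prod.ext_iff] at hπ
        obtain ⟨-, h1, h2⟩ := hπ
        rw [h1, h2, if_neg hblk, mul_zero]
      rw [Finset.sum_congr rfl hz, Finset.sum_const_zero]
      simp [hblk]
  refine le_trans (Finset.sum_le_sum (fun p _ => hterm p)) ?_
  rw [Finset.sum_ite, Finset.sum_const, Finset.sum_const_zero, add_zero]
  have hcard := card_sameblock_le d m (by omega)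
  have hd16' : 16 ≤ d := by nlinarith
  have hcd : ((Finset.filter (fun p : Fin d × Fin d =>
      p.1.val / m = p.2.val / m ∧ p.1 ≠ p.2) Finset.univ).card : ℝ)
      ≤ (d:ℝ) * ((m:ℝ) - 1) := by
    calc ((Finset.filter (fun p : Fin d × Fin d =>
        p.1.val / m = p.2.val / m ∧ p.1 ≠ p.2) Finset.univ).card : ℝ)
        ≤ ((d * (m-1) : ℕ) : ℝ) := by exact_mod_cast hcard
      _ = (d:ℝ) * ((m:ℝ) - 1) := by
          push_cast [Nat.cast_sub hm1]
          ring
  rw [nsmul_eq_mul, mul_one_div]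
  have hdr : (d:ℝ) = (d':ℝ) * (m:ℝ) := by rw [hdm]; push_cast; ring
  have h16 : (16:ℝ) ≤ (d':ℝ) := by exact_mod_cast hd16
  have h16d : (16:ℝ) ≤ (d:ℝ) := by exact_mod_cast hd16'
  have hm1' : (1:ℝ) ≤ (m:ℝ) := by exact_mod_cast hm1
  have hd'pos : (0:ℝ) < (d':ℝ) := by linarith
  have hDDpos : (0:ℝ) < (d:ℝ) * ((d:ℝ) - 1) := by nlinarith
  rw [div_le_div_iff₀ hDDpos hd'pos]
  have hcn : (0:ℝ) ≤ ((Finset.filter (fun p : Fin d × Fin d =>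
      p.1.val / m = p.2.val / m ∧ p.1 ≠ p.2) Finset.univ).card : ℝ) := Nat.cast_nonneg _
  nlinarith [mul_le_mul_of_nonneg_right hcd (le_of_lt hd'pos)]

lemma sketch_expand (d d' : ℕ) (hd0 : 0 < d) (hd'0 : 0 < d') (hdvd : d' ∣ d)
    (π : Equiv.Perm (Fin d)) (s x : Fin d → ℝ) (hs : ∀ i, s i = 1 ∨ s i = -1) :
    (d:ℝ)/(d':ℝ) * sketchNormSq d d' π s x
      = (∑ i, x i ^ 2) +
        ∑ y ∈ (Finset.univ : Finset (Fin d)).offDiag,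
          (if (π y.1).val / (d/d') = (π y.2).val / (d/d') then 1 else (0:ℝ))
            * (s y.1 * s y.2) * (x y.1 * x y.2) := by
  classical
  have hm0 : 0 < d / d' := Nat.div_pos (Nat.le_of_dvd hd0 hdvd) hd'0
  have hdm : d' * (d / d') = d := Nat.mul_div_cancel' hdvd
  have hkeylt : ∀ i, (π i).val / (d/d') < d' := by
    intro i
    rw [Nat.div_lt_iff_lt_mul hm0]
    calc (π i).val < d := (π i).isLt
      _ = d' * (d/d') := hdm.symm
  set key : Fin d → Fin d' := fun i => ⟨(π i).val / (d/d'), hkeylt i⟩ with hkey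
  set t : Fin d → ℝ := fun i => s i * x i with ht
  -- step 1 : pull out the sqrt factor
  have h1 : sketchNormSq d d' π s x
      = ((d':ℝ)/(d:ℝ)) * ∑ r : Fin d',
          (∑ i ∈ Finset.univ.filter (fun i => key i = r), t i) ^ 2 := by
    rw [sketchNormSq, Finset.mul_sum]
    refine Finset.sum_congr rfl fun r _ => ?_
    have hfe : Finset.univ.filter (fun i : Fin d => (π i).val / (d / d') = (r : ℕ))
        = Finset.univ.filter (fun i => key i = r) := by
      apply Finset.filter_congr; intro i _; simp [hkey, Fin.ext_iff]
    rw [hfe, mul_pow, Real.sq_sqrt (by positivity)]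
  rw [h1]
  have hne : (d:ℝ) ≠ 0 := Nat.cast_ne_zero.mpr hd0.ne'
  have hne' : (d':ℝ) ≠ 0 := Nat.cast_ne_zero.mpr hd'0.ne'
  rw [← mul_assoc, div_mul_div_comm, mul_comm (d:ℝ) (d':ℝ), div_self (by positivity), one_mul]
  -- step 2 : expand squares and refactor via fibers
  have h2 : ∑ r : Fin d', (∑ i ∈ Finset.univ.filter (fun i => key i = r), t i) ^ 2
      = ∑ i : Fin d, (t i * ∑ j ∈ Finset.univ.filter (fun j => key j = key i), t j) := by
    rw [← Finset.sum_fiberwise (Finset.univ : Finset (Fin d)) key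
      (fun i => t i * ∑ j ∈ Finset.univ.filter (fun j => key j = key i), t j)]
    refine Finset.sum_congr rfl fun r _ => ?_
    rw [sq, Finset.sum_mul]
    refine Finset.sum_congr rfl fun i hi => ?_
    simp only [Finset.mem_filter] at hi
    rw [hi.2]
  rw [h2]
  have h3 : ∀ i : Fin d, t i * ∑ j ∈ Finset.univ.filter (fun j => key j = key i), t j
      = ∑ j : Fin d, (if key j = key i then t i * t j else 0) := by
    intro i
    rw [Finset.mul_sum, Finset.sum_filter]
  rw [Finset.sum_congr rfl (fun i _ => h3 i), ← Finset.sum_product']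
  -- step 3 : split diagonal and off-diagonal
  have hoff : (Finset.univ : Finset (Fin d)).offDiag
      = (Finset.univ ×ˢ Finset.univ : Finset (Fin d × Fin d)).filter
        (fun y => y.1 ≠ y.2) := by
    ext y; simp [Finset.mem_offDiag]
  have hsplit : ∀ y : Fin d × Fin d,
      (if key y.2 = key y.1 then t y.1 * t y.2 else 0)
      = (if y.1 = y.2 then x y.1 ^ 2 else 0)
        + (if y.1 ≠ y.2 then
            (if (π y.1).val / (d/d') = (π y.2).val / (d/d') then 1 else (0:ℝ))
              * (s y.1 * s y.2) * (x y.1 * x y.2) else 0) := by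
    intro y
    by_cases hy : y.1 = y.2
    · have hk : key y.2 = key y.1 := by rw [hy]
      rw [if_pos hk, if_pos hy, if_neg (fun hh => hh hy), add_zero, ht, hy]
      simp only
      rcases hs y.2 with h | h <;> rw [h] <;> ring
    · rw [if_neg hy, if_pos hy, zero_add, ht]
      simp only
      have hiff : (key y.2 = key y.1) ↔ ((π y.1).val / (d/d') = (π y.2).val / (d/d')) := by
        rw [hkey]; simp [Fin.ext_iff, eq_comm]
      by_cases hk : key y.2 = key y.1
      · rw [if_pos hk, if_pos (hiff.mp hk)]; ring
      · rw [if_neg hk, if_neg (fun hh => hk (hiff.mpr hh))]; ring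
  rw [Finset.sum_congr rfl (fun y _ => hsplit y), Finset.sum_add_distrib]
  congr 1
  · rw [Finset.sum_product]
    refine Finset.sum_congr rfl fun i _ => ?_
    rw [show (∑ j : Fin d, if (i, j).1 = (i, j).2 then x (i, j).1 ^ 2 else 0)
      = ∑ j : Fin d, if i = j then x i ^ 2 else 0 from rfl, Finset.sum_ite_eq]
    simp
  · rw [hoff, Finset.sum_filter]

/-- For `d' ≥ 16` and `ε := 4/√d'`, with `h` a 2-wise independent random permutation, `σ`
4-wise independent uniform random signs, `h` and `σ` independent, and any unit vector `x`,
`ℙ(|√(d/d')·‖A_{h,σ}x‖₂ − 1| > ε) < 1/2`. -/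
theorem countSketch_distortion_prob
    (d d' : ℕ) (hd' : 0 < d') (hdvd : d' ∣ d)
    {Ω : Type*} [MeasurableSpace Ω] (ℙ : Measure Ω) [IsProbabilityMeasure ℙ]
    (h : Ω → Equiv.Perm (Fin d)) (σ : Ω → Fin d → ℝ)
    (hmeash : ∀ π : Equiv.Perm (Fin d), MeasurableSet {ω | h ω = π})
    (hmeasσ : ∀ g : Fin d → ℝ, MeasurableSet {ω | σ ω = g})
    (hperm : ∀ i j a b : Fin d, i ≠ j → a ≠ b →
      (ℙ {ω | h ω i = a ∧ h ω j = b}).toReal = 1 / ((d : ℝ) * ((d : ℝ) - 1)))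
    (hσval : ∀ ω i, σ ω i = 1 ∨ σ ω i = -1)
    (hσ4 : ∀ i₁ i₂ i₃ i₄ : Fin d,
      i₁ ≠ i₂ → i₁ ≠ i₃ → i₁ ≠ i₄ → i₂ ≠ i₃ → i₂ ≠ i₄ → i₃ ≠ i₄ →
      ∀ s₁ s₂ s₃ s₄ : ℝ, (s₁ = 1 ∨ s₁ = -1) → (s₂ = 1 ∨ s₂ = -1) →
        (s₃ = 1 ∨ s₃ = -1) → (s₄ = 1 ∨ s₄ = -1) →
        (ℙ {ω | σ ω i₁ = s₁ ∧ σ ω i₂ = s₂ ∧ σ ω i₃ = s₃ ∧ σ ω i₄ = s₄}).toReal = 1 / 16)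
    (hind : ∀ (π : Equiv.Perm (Fin d)) (g : Fin d → ℝ),
      (ℙ {ω | h ω = π ∧ σ ω = g}).toReal
        = (ℙ {ω | h ω = π}).toReal * (ℙ {ω | σ ω = g}).toReal)
    (hd16 : 16 ≤ d')
    (x : Fin d → ℝ) (hx : Real.sqrt (∑ i, (x i) ^ 2) = 1) :
    (ℙ {ω | |Real.sqrt ((d : ℝ) / (d' : ℝ)) *
        Real.sqrt (sketchNormSq d d' (h ω) (σ ω) x) - 1| > 4 / Real.sqrt (d' : ℝ)}).toReal
      < 1 / 2 := by
  classical
  -- basic numeric facts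
  have hd0 : 0 < d := by
    rcases Nat.eq_zero_or_pos d with h0 | h0
    · subst h0
      simp at hx
    · exact h0
  have hdd' : d' ≤ d := Nat.le_of_dvd hd0 hdvd
  have hm1 : 1 ≤ d / d' := Nat.div_pos hdd' hd'
  have hdm : d = d' * (d / d') := (Nat.mul_div_cancel' hdvd).symm
  have hd4 : 4 ≤ d := by omega
  have hx2 : ∑ i, x i ^ 2 = 1 := Real.sqrt_eq_one.mp hx
  have hd'pos : (0:ℝ) < (d':ℝ) := by positivity
  -- the Boolean classifier of the signs
  set bσ : Ω → (Fin d → Bool) := fun ω i => decide (σ ω i = 1) with hbσ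
  have hcomp : ∀ ω (i : Fin d) (u : Bool), bσ ω i = u ↔ σ ω i = sgn' u := by
    intro ω i u
    have hb : bσ ω i = decide (σ ω i = 1) := by rw [hbσ]
    rcases hσval ω i with hh | hh <;> cases u <;>
      simp only [hb, hh, sgn'] <;> norm_num
  have hgs : ∀ ω, σ ω = fun i => sgn' (bσ ω i) := by
    intro ω; funext i
    exact (hcomp ω i (bσ ω i)).mp rfl
  have hbiff : ∀ ω b, bσ ω = b ↔ σ ω = fun i => sgn' (b i) := by
    intro ω b
    constructor
    · intro hb; rw [hgs ω, hb]
    · intro hb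
      funext i
      exact (hcomp ω i (b i)).mpr (congrFun hb i)
  -- the two marginal weights
  set q : Equiv.Perm (Fin d) → ℝ := fun π => (ℙ {ω | h ω = π}).toReal with hq
  set r : (Fin d → Bool) → ℝ := fun b => (ℙ {ω | σ ω = fun i => sgn' (b i)}).toReal with hr
  have hq0 : ∀ π, 0 ≤ q π := fun π => ENNReal.toReal_nonneg
  have hr0 : ∀ b, 0 ≤ r b := fun b => ENNReal.toReal_nonneg
  -- measurability of the fibers
  have hsetb : ∀ b, {ω | bσ ω = b} = {ω | σ ω = fun i => sgn' (b i)} :=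
    fun b => Set.ext fun ω => hbiff ω b
  have hmeasb : ∀ b, MeasurableSet {ω | bσ ω = b} := by
    intro b; rw [hsetb b]; exact hmeasσ _
  have hsetc : ∀ y : Equiv.Perm (Fin d) × (Fin d → Bool),
      {ω | (h ω, bσ ω) = y} = {ω | h ω = y.1} ∩ {ω | σ ω = fun i => sgn' (y.2 i)} := by
    intro y; ext ω
    simp only [Set.mem_setOf_eq, Prod.ext_iff, Set.mem_inter_iff]
    rw [hbiff ω y.2]
  have hmeasc : ∀ y : Equiv.Perm (Fin d) × (Fin d → Bool),
      MeasurableSet {ω | (h ω, bσ ω) = y} := by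
    intro y; rw [hsetc y]; exact (hmeash y.1).inter (hmeasσ _)
  -- cell probabilities factorize
  have hcell : ∀ y : Equiv.Perm (Fin d) × (Fin d → Bool),
      (ℙ {ω | (h ω, bσ ω) = y}).toReal = q y.1 * r y.2 := by
    intro y
    have : {ω | (h ω, bσ ω) = y} = {ω | h ω = y.1 ∧ σ ω = fun i => sgn' (y.2 i)} := by
      rw [hsetc y]; rfl
    rw [this, hind y.1 (fun i => sgn' (y.2 i))]
  -- total masses
  have hqsum : ∑ π : Equiv.Perm (Fin d), q π = 1 := by
    have hp := partition_toReal ℙ h hmeash (fun _ => True)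
    simp only [Set.setOf_true, measure_univ, ENNReal.toReal_one, Finset.filter_true] at hp
    rw [← hp]
  have hrsum : ∑ b : Fin d → Bool, r b = 1 := by
    have hp := partition_toReal ℙ bσ hmeasb (fun _ => True)
    simp only [Set.setOf_true, measure_univ, ENNReal.toReal_one, Finset.filter_true] at hp
    rw [hp]
    refine Finset.sum_congr rfl fun b _ => ?_
    show (ℙ {ω | σ ω = fun i => sgn' (b i)}).toReal = (ℙ {ω | bσ ω = b}).toReal
    rw [hsetb b]
  -- the 4-wise fiber property of r
  have hr4 : R4 r := by
    intro i1 i2 i3 i4 h12 h13 h14 h23 h24 h34 u1 u2 u3 u4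
    have hp := partition_toReal ℙ bσ hmeasb
      (fun b => b i1 = u1 ∧ b i2 = u2 ∧ b i3 = u3 ∧ b i4 = u4)
    have hsetev : {ω | bσ ω i1 = u1 ∧ bσ ω i2 = u2 ∧ bσ ω i3 = u3 ∧ bσ ω i4 = u4}
        = {ω | σ ω i1 = sgn' u1 ∧ σ ω i2 = sgn' u2 ∧ σ ω i3 = sgn' u3 ∧ σ ω i4 = sgn' u4} := by
      ext ω
      simp only [Set.mem_setOf_eq, hcomp ω]
    rw [hsetev] at hp
    rw [hσ4 i1 i2 i3 i4 h12 h13 h14 h23 h24 h34 _ _ _ _ (sgn'_val u1) (sgn'_val u2)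
      (sgn'_val u3) (sgn'_val u4)] at hp
    rw [hp]
    refine Finset.sum_congr rfl fun b _ => ?_
    show (ℙ {ω | σ ω = fun i => sgn' (b i)}).toReal = (ℙ {ω | bσ ω = b}).toReal
    rw [hsetb b]
  -- the pairwise fiber property of q
  have hq2 : ∀ i j a c : Fin d, i ≠ j → a ≠ c →
      ∑ π ∈ Finset.univ.filter (fun π : Equiv.Perm (Fin d) => π i = a ∧ π j = c), q π
        = 1/((d:ℝ)*((d:ℝ)-1)) := by
    intro i j a c hij hac
    have hp := partition_toReal ℙ h hmeash (fun π : Equiv.Perm (Fin d) => π i = a ∧ π j = c)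
    rw [← hperm i j a c hij hac]
    exact hp.symm
  -- the expansion pieces
  set Dp : Fin d × Fin d → Equiv.Perm (Fin d) → ℝ :=
    fun p π => if (π p.1).val / (d/d') = (π p.2).val / (d/d') then 1 else 0 with hDp
  set Gp : Fin d × Fin d → (Fin d → Bool) → ℝ :=
    fun p b => sgn' (b p.1) * sgn' (b p.2) with hGp
  set Xp : Fin d × Fin d → ℝ := fun p => x p.1 * x p.2 with hXp
  set Z : Equiv.Perm (Fin d) × (Fin d → Bool) → ℝ :=
    fun y => ∑ p ∈ (Finset.univ : Finset (Fin d)).offDiag, Dp p y.1 * Gp p y.2 * Xp p with hZ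
  have hYid : ∀ y : Equiv.Perm (Fin d) × (Fin d → Bool),
      (d:ℝ)/(d':ℝ) * sketchNormSq d d' y.1 (fun i => sgn' (y.2 i)) x = 1 + Z y := by
    intro y
    rw [sketch_expand d d' hd0 hd' hdvd y.1 _ x (fun i => sgn'_val (y.2 i)), hx2]
  -- Chebyshev pointwise bound on the bad set
  set ε : ℝ := 4 / Real.sqrt (d':ℝ) with hε
  have hε0 : 0 ≤ ε := by positivity
  set Q : Equiv.Perm (Fin d) × (Fin d → Bool) → Prop :=
    fun y => |Real.sqrt ((d : ℝ) / (d' : ℝ)) *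
        Real.sqrt (sketchNormSq d d' y.1 (fun i => sgn' (y.2 i)) x) - 1| > ε with hQ
  have hcheb : ∀ y, Q y → ε^2 ≤ (Z y)^2 := by
    intro y hy
    have hS0 : 0 ≤ sketchNormSq d d' y.1 (fun i => sgn' (y.2 i)) x := by
      rw [sketchNormSq]
      exact Finset.sum_nonneg fun _ _ => sq_nonneg _
    have hY0 : 0 ≤ (d:ℝ)/(d':ℝ) * sketchNormSq d d' y.1 (fun i => sgn' (y.2 i)) x := by
      apply mul_nonneg (by positivity) hS0
    set Yv := (d:ℝ)/(d':ℝ) * sketchNormSq d d' y.1 (fun i => sgn' (y.2 i)) x with hYv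
    have hsq : Real.sqrt ((d : ℝ) / (d' : ℝ)) *
        Real.sqrt (sketchNormSq d d' y.1 (fun i => sgn' (y.2 i)) x) = Real.sqrt Yv :=
      (Real.sqrt_mul (by positivity) _).symm
    rw [hQ] at hy
    simp only [hsq] at hy
    set u := Real.sqrt Yv with hu
    have hu0 : 0 ≤ u := Real.sqrt_nonneg _
    have hu2 : u^2 = Yv := Real.sq_sqrt hY0
    have hfactor : Yv - 1 = (u - 1) * (u + 1) := by rw [← hu2]; ring
    have habs : |Yv - 1| = |u - 1| * (u + 1) := by
      rw [hfactor, abs_mul, abs_of_nonneg (show (0:ℝ) ≤ u + 1 by linarith)]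
    have hlow : ε < |Yv - 1| := by
      calc ε < |u - 1| := hy
        _ = |u - 1| * 1 := (mul_one _).symm
        _ ≤ |u - 1| * (u + 1) := by
            apply mul_le_mul_of_nonneg_left (by linarith) (abs_nonneg _)
        _ = |Yv - 1| := habs.symm
    have hZy : Yv - 1 = Z y := by
      have := hYid y; rw [← hYv] at this; linarith
    calc ε^2 ≤ |Yv - 1|^2 := by
          apply pow_le_pow_left₀ hε0 (le_of_lt hlow)
      _ = (Yv - 1)^2 := sq_abs _
      _ = (Z y)^2 := by rw [hZy]
  -- probability of the bad event as a finite sum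
  have hev : (ℙ {ω | |Real.sqrt ((d : ℝ) / (d' : ℝ)) *
        Real.sqrt (sketchNormSq d d' (h ω) (σ ω) x) - 1| > 4 / Real.sqrt (d' : ℝ)}).toReal
      = ∑ y ∈ Finset.univ.filter Q, q y.1 * r y.2 := by
    have hsetQ : {ω | |Real.sqrt ((d : ℝ) / (d' : ℝ)) *
        Real.sqrt (sketchNormSq d d' (h ω) (σ ω) x) - 1| > 4 / Real.sqrt (d' : ℝ)}
        = {ω | Q ((h ω, bσ ω))} := by
      ext ω
      simp only [Set.mem_setOf_eq, hQ]
      rw [hgs ω]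
    rw [hsetQ, partition_toReal ℙ (fun ω => (h ω, bσ ω)) hmeasc Q]
    exact Finset.sum_congr rfl fun y _ => hcell y
  rw [hev]
  -- the second moment bound
  have hM : ∑ y : Equiv.Perm (Fin d) × (Fin d → Bool), (q y.1 * r y.2) * (Z y)^2
      ≤ 2/(d':ℝ) := by
    -- Step A : pointwise expansion of the square
    have hZsq : ∀ y : Equiv.Perm (Fin d) × (Fin d → Bool),
        (q y.1 * r y.2) * (Z y)^2
          = ∑ p ∈ (Finset.univ : Finset (Fin d)).offDiag,
              ∑ p2 ∈ (Finset.univ : Finset (Fin d)).offDiag,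
              (q y.1 * (Dp p y.1 * Dp p2 y.1)) * (r y.2 * (Gp p y.2 * Gp p2 y.2))
                * (Xp p * Xp p2) := by
      intro y
      have hZy : Z y = ∑ p ∈ (Finset.univ : Finset (Fin d)).offDiag,
          Dp p y.1 * Gp p y.2 * Xp p := by rw [hZ]
      rw [sq, hZy, Finset.sum_mul_sum, Finset.mul_sum]
      refine Finset.sum_congr rfl fun p _ => ?_
      rw [Finset.mul_sum]
      refine Finset.sum_congr rfl fun p2 _ => ?_
      ring
    rw [Finset.sum_congr rfl fun y _ => hZsq y]
    -- Step B : exchange the sums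
    rw [Finset.sum_comm]
    have hB : ∀ p ∈ (Finset.univ : Finset (Fin d)).offDiag,
        (∑ y : Equiv.Perm (Fin d) × (Fin d → Bool),
          ∑ p2 ∈ (Finset.univ : Finset (Fin d)).offDiag,
            (q y.1 * (Dp p y.1 * Dp p2 y.1)) * (r y.2 * (Gp p y.2 * Gp p2 y.2))
              * (Xp p * Xp p2))
        = ∑ p2 ∈ (Finset.univ : Finset (Fin d)).offDiag,
            ∑ y : Equiv.Perm (Fin d) × (Fin d → Bool),
            (q y.1 * (Dp p y.1 * Dp p2 y.1)) * (r y.2 * (Gp p y.2 * Gp p2 y.2))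
              * (Xp p * Xp p2) := fun p _ => Finset.sum_comm
    rw [Finset.sum_congr rfl hB]
    -- Step C : factorize the independent sums
    have hfact : ∀ p p2 : Fin d × Fin d,
        (∑ y : Equiv.Perm (Fin d) × (Fin d → Bool),
          (q y.1 * (Dp p y.1 * Dp p2 y.1)) * (r y.2 * (Gp p y.2 * Gp p2 y.2))
            * (Xp p * Xp p2))
        = (∑ π : Equiv.Perm (Fin d), q π * (Dp p π * Dp p2 π))
            * (∑ b : Fin d → Bool, r b * (Gp p b * Gp p2 b)) * (Xp p * Xp p2) := by
      intro p p2
      rw [Fintype.sum_prod_type]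
      rw [Finset.sum_mul_sum (f := fun π => q π * (Dp p π * Dp p2 π))
        (g := fun b => r b * (Gp p b * Gp p2 b)), Finset.sum_mul]
      refine Finset.sum_congr rfl fun π _ => ?_
      rw [Finset.sum_mul]
    rw [Finset.sum_congr rfl fun p _ => Finset.sum_congr rfl fun p2 _ => hfact p p2]
    -- Step D : bound each term
    have hbound : ∀ p ∈ (Finset.univ : Finset (Fin d)).offDiag,
        ∀ p2 ∈ (Finset.univ : Finset (Fin d)).offDiag,
        (∑ π : Equiv.Perm (Fin d), q π * (Dp p π * Dp p2 π))
            * (∑ b : Fin d → Bool, r b * (Gp p b * Gp p2 b)) * (Xp p * Xp p2)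
          ≤ (if p2 = p then (Xp p)^2 * (1/(d':ℝ)) else 0)
            + (if p2 = (p.2, p.1) then (Xp p)^2 * (1/(d':ℝ)) else 0) := by
      intro p hp p2 hp2
      rw [Finset.mem_offDiag] at hp hp2
      obtain ⟨-, -, hpne⟩ := hp
      obtain ⟨-, -, hp2ne⟩ := hp2
      have hswapne : p ≠ (p.2, p.1) := fun hh => hpne (congrArg Prod.fst hh)
      by_cases h1 : p2 = p
      · subst h1
        rw [if_pos rfl, if_neg hswapne, add_zero]
        have hSb : ∑ b : Fin d → Bool, r b * (Gp p2 b * Gp p2 b) = 1 := by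
          rw [← hrsum]
          refine Finset.sum_congr rfl fun b _ => ?_
          have e1 := sgn'_mul_self (b p2.1)
          have e2 := sgn'_mul_self (b p2.2)
          rw [hGp]
          simp only
          linear_combination (r b * (sgn' (b p2.2) * sgn' (b p2.2))) * e1 + r b * e2
        have hD : ∀ π : Equiv.Perm (Fin d), Dp p2 π * Dp p2 π
            = (if (π p2.1).val / (d/d') = (π p2.2).val / (d/d') then (1:ℝ) else 0) := by
          intro π
          rw [hDp]
          simp only
          split <;> norm_num
        have hSπ : ∑ π : Equiv.Perm (Fin d), q π * (Dp p2 π * Dp p2 π) ≤ 1/(d':ℝ) := by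
          calc ∑ π : Equiv.Perm (Fin d), q π * (Dp p2 π * Dp p2 π)
              = ∑ π : Equiv.Perm (Fin d), q π *
                  (if (π p2.1).val / (d/d') = (π p2.2).val / (d/d') then (1:ℝ) else 0) :=
                Finset.sum_congr rfl fun π _ => by rw [hD π]
            _ ≤ 1/(d':ℝ) := sumq_delta d d' (d/d') hdm hd16 hm1 q hq0 hq2 p2.1 p2.2 hpne
        rw [hSb, mul_one]
        calc (∑ π : Equiv.Perm (Fin d), q π * (Dp p2 π * Dp p2 π)) * (Xp p2 * Xp p2)
            ≤ (1/(d':ℝ)) * (Xp p2 * Xp p2) :=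
              mul_le_mul_of_nonneg_right hSπ (mul_self_nonneg _)
          _ = (Xp p2)^2 * (1/(d':ℝ)) := by ring
      · by_cases h2 : p2 = (p.2, p.1)
        · subst h2
          rw [if_neg h1, if_pos rfl, zero_add]
          have hSb : ∑ b : Fin d → Bool, r b * (Gp p b * Gp (p.2, p.1) b) = 1 := by
            rw [← hrsum]
            refine Finset.sum_congr rfl fun b _ => ?_
            have e1 := sgn'_mul_self (b p.1)
            have e2 := sgn'_mul_self (b p.2)
            rw [hGp]
            simp only
            linear_combination (r b * (sgn' (b p.2) * sgn' (b p.2))) * e1 + r b * e2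
          have hD : ∀ π : Equiv.Perm (Fin d), Dp p π * Dp (p.2, p.1) π
              = (if (π p.1).val / (d/d') = (π p.2).val / (d/d') then (1:ℝ) else 0) := by
            intro π
            show (if (π p.1).val / (d/d') = (π p.2).val / (d/d') then (1:ℝ) else 0)
                * (if (π p.2).val / (d/d') = (π p.1).val / (d/d') then (1:ℝ) else 0)
              = (if (π p.1).val / (d/d') = (π p.2).val / (d/d') then (1:ℝ) else 0)
            by_cases hc : (π p.1).val / (d/d') = (π p.2).val / (d/d')
            · rw [if_pos hc, if_pos hc.symm]; norm_num
            · rw [if_neg hc, if_neg (fun hh => hc (Eq.symm hh)), mul_zero]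
          have hSπ : ∑ π : Equiv.Perm (Fin d), q π * (Dp p π * Dp (p.2, p.1) π)
              ≤ 1/(d':ℝ) := by
            calc ∑ π : Equiv.Perm (Fin d), q π * (Dp p π * Dp (p.2, p.1) π)
                = ∑ π : Equiv.Perm (Fin d), q π *
                    (if (π p.1).val / (d/d') = (π p.2).val / (d/d') then (1:ℝ) else 0) :=
                  Finset.sum_congr rfl fun π _ => by rw [hD π]
              _ ≤ 1/(d':ℝ) := sumq_delta d d' (d/d') hdm hd16 hm1 q hq0 hq2 p.1 p.2 hpne
          rw [hSb, mul_one]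
          have hXsw : Xp (p.2, p.1) = Xp p := by rw [hXp]; simp only; ring
          rw [hXsw]
          calc (∑ π : Equiv.Perm (Fin d), q π * (Dp p π * Dp (p.2, p.1) π)) * (Xp p * Xp p)
              ≤ (1/(d':ℝ)) * (Xp p * Xp p) :=
                mul_le_mul_of_nonneg_right hSπ (mul_self_nonneg _)
            _ = (Xp p)^2 * (1/(d':ℝ)) := by ring
        · have h1' : ¬(p2.1 = p.1 ∧ p2.2 = p.2) := by
            intro hh; exact h1 (Prod.ext hh.1 hh.2)
          have h2' : ¬(p2.1 = p.2 ∧ p2.2 = p.1) := by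
            intro hh; exact h2 (Prod.ext hh.1 hh.2)
          have hSb : ∑ b : Fin d → Bool, r b * (Gp p b * Gp p2 b) = 0 := by
            have hc := sumr_cross r (by omega) hr4 p.1 p.2 p2.1 p2.2 hpne hp2ne h1' h2'
            rw [← hc]
          rw [hSb, mul_zero, zero_mul, if_neg h1, if_neg h2, add_zero]
    -- Step E : sum up the bounds
    calc ∑ p ∈ (Finset.univ : Finset (Fin d)).offDiag,
          ∑ p2 ∈ (Finset.univ : Finset (Fin d)).offDiag,
          (∑ π : Equiv.Perm (Fin d), q π * (Dp p π * Dp p2 π))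
            * (∑ b : Fin d → Bool, r b * (Gp p b * Gp p2 b)) * (Xp p * Xp p2)
        ≤ ∑ p ∈ (Finset.univ : Finset (Fin d)).offDiag,
            ∑ p2 ∈ (Finset.univ : Finset (Fin d)).offDiag,
            ((if p2 = p then (Xp p)^2 * (1/(d':ℝ)) else 0)
              + (if p2 = (p.2, p.1) then (Xp p)^2 * (1/(d':ℝ)) else 0)) :=
          Finset.sum_le_sum fun p hp => Finset.sum_le_sum fun p2 hp2 => hbound p hp p2 hp2
      _ = ∑ p ∈ (Finset.univ : Finset (Fin d)).offDiag, (2/(d':ℝ)) * (Xp p)^2 := by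
          refine Finset.sum_congr rfl fun p hp => ?_
          rw [Finset.mem_offDiag] at hp
          obtain ⟨-, -, hpne⟩ := hp
          rw [Finset.sum_add_distrib, Finset.sum_ite_eq', Finset.sum_ite_eq',
            if_pos (Finset.mem_offDiag.mpr ⟨Finset.mem_univ _, Finset.mem_univ _, hpne⟩),
            if_pos (Finset.mem_offDiag.mpr
              ⟨Finset.mem_univ _, Finset.mem_univ _, fun hh => hpne hh.symm⟩)]
          ring
      _ = (2/(d':ℝ)) * ∑ p ∈ (Finset.univ : Finset (Fin d)).offDiag, (Xp p)^2 := by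
          rw [Finset.mul_sum]
      _ ≤ (2/(d':ℝ)) * 1 := by
          apply mul_le_mul_of_nonneg_left _ (by positivity)
          calc ∑ p ∈ (Finset.univ : Finset (Fin d)).offDiag, (Xp p)^2
              ≤ ∑ p : Fin d × Fin d, (Xp p)^2 := by
                apply Finset.sum_le_sum_of_subset_of_nonneg (Finset.subset_univ _)
                intro p _ _
                exact sq_nonneg _
            _ = (∑ i, x i ^ 2) * (∑ i, x i ^ 2) := by
                rw [Finset.sum_mul_sum, Fintype.sum_prod_type]
                refine Finset.sum_congr rfl fun i _ => Finset.sum_congr rfl fun j _ => ?_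
                rw [hXp]
                simp only
                ring
            _ = 1 := by rw [hx2]; norm_num
      _ = 2/(d':ℝ) := mul_one _
  -- Chebyshev inequality assembly
  have hchain : ε^2 * (∑ y ∈ Finset.univ.filter Q, q y.1 * r y.2) ≤ 2/(d':ℝ) := by
    rw [Finset.mul_sum]
    calc ∑ y ∈ Finset.univ.filter Q, ε^2 * (q y.1 * r y.2)
        ≤ ∑ y ∈ Finset.univ.filter Q, (q y.1 * r y.2) * (Z y)^2 := by
          refine Finset.sum_le_sum fun y hy => ?_
          rw [Finset.mem_filter] at hy
          exact mul_le_mul_of_nonneg_left (hcheb y hy.2)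
            (mul_nonneg (hq0 y.1) (hr0 y.2)) |>.trans_eq' (mul_comm _ _)
      _ ≤ ∑ y : Equiv.Perm (Fin d) × (Fin d → Bool), (q y.1 * r y.2) * (Z y)^2 := by
          apply Finset.sum_le_sum_of_subset_of_nonneg (Finset.subset_univ _)
          intro y _ _
          exact mul_nonneg (mul_nonneg (hq0 y.1) (hr0 y.2)) (sq_nonneg _)
      _ ≤ 2/(d':ℝ) := hM
  have hε2 : ε^2 = 16/(d':ℝ) := by
    rw [hε, div_pow, Real.sq_sqrt (le_of_lt hd'pos)]
    norm_num
  rw [hε2] at hchain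
  have hP0 : 0 ≤ ∑ y ∈ Finset.univ.filter Q, q y.1 * r y.2 :=
    Finset.sum_nonneg fun y _ => mul_nonneg (hq0 y.1) (hr0 y.2)
  rw [div_mul_eq_mul_div, div_le_div_iff₀ (by positivity) hd'pos] at hchain
  nlinarith [hchain, hd'pos]
end

section
/- There exists a universal constant K such that for every ε with 0 < ε < 1/2 and all powers of two d and d' with d' dividing d and d' ≥ K/ε², there exists a finite collection 𝒫 of orthogonal decompositions of ℝ^d into ℝ^{d'} with |𝒫| ≤ d^{K·d/d'}, such that for every x ∈ ℝ^d with ‖x‖₂ = 1 there exists a decomposition {P_i} ∈ 𝒫 satisfying |√(d/d') · ‖P_i x‖₂ − 1| < ε for every i = 1, …, d/d'. -/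
/-- `{P_i}_{i=1}^{d/d'}` is an orthogonal decomposition of `ℝ^d` into `ℝ^{d'}` if the set of all
row vectors of the `P_i` forms an orthonormal basis of `ℝ^d` (equivalently, since there are
exactly `(d/d')·d' = d` rows, the rows are pairwise orthonormal). -/
def IsOrthDecomp (d d' : ℕ) (P : Fin (d / d') → Matrix (Fin d') (Fin d) ℝ) : Prop :=
  ∀ (i : Fin (d / d')) (a : Fin d') (j : Fin (d / d')) (b : Fin d'),
    (∑ t, P i a t * P j b t) = if i = j ∧ a = b then 1 else 0

open Finset

/-- Discrete intermediate value theorem, increasing direction. -/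
lemma ivt_up (η c : ℝ) (hη : 0 ≤ η) :
    ∀ (T : ℕ) (g : ℕ → ℝ), (∀ r < T, |g (r+1) - g r| ≤ η) →
      g 0 ≤ c → c ≤ g T → ∃ r ≤ T, |g r - c| ≤ η := by
  intro T
  induction T with
  | zero =>
    intro g _ h0 hT
    exact ⟨0, le_refl 0, by rw [abs_le]; constructor <;> linarith⟩
  | succ T ih =>
    intro g hstep h0 hT
    by_cases hc : c ≤ g T
    · obtain ⟨r, hr, h⟩ := ih g (fun r hr => hstep r (by omega)) h0 hc
      exact ⟨r, by omega, h⟩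
    · push_neg at hc
      refine ⟨T+1, le_refl _, ?_⟩
      have h2 := hstep T (by omega)
      rw [abs_le] at h2 ⊢
      constructor <;> linarith

lemma ivt_between (η c : ℝ) (hη : 0 ≤ η) (T : ℕ) (g : ℕ → ℝ)
    (hstep : ∀ r < T, |g (r+1) - g r| ≤ η)
    (hc : (g 0 ≤ c ∧ c ≤ g T) ∨ (g T ≤ c ∧ c ≤ g 0)) :
    ∃ r ≤ T, |g r - c| ≤ η := by
  rcases hc with ⟨h0, hT⟩ | ⟨hT, h0⟩
  · exact ivt_up η c hη T g hstep h0 hT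
  · obtain ⟨r, hr, h⟩ := ivt_up η (-c) hη T (fun r => -(g r))
      (fun r hr => by
        have := hstep r hr
        calc |-(g (r+1)) - -(g r)| = |g (r+1) - g r| := by rw [abs_sub_comm]; ring_nf
        _ ≤ η := this)
      (by linarith) (by linarith)
    refine ⟨r, hr, ?_⟩
    calc |g r - c| = |-(g r) - -c| := by rw [abs_sub_comm]; ring_nf
    _ ≤ η := h

noncomputable def Cf (t : ℝ) : ℝ := (1 - t^2)/(1+t^2)
noncomputable def Sf (t : ℝ) : ℝ := 2*t/(1+t^2)

lemma denom_pos (t : ℝ) : 0 < 1 + t^2 := by positivity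

lemma Cf_sq_add_Sf_sq (t : ℝ) : Cf t^2 + Sf t^2 = 1 := by
  have h := (denom_pos t).ne'
  rw [Cf, Sf, div_pow, div_pow, ← add_div, div_eq_one_iff_eq (pow_ne_zero 2 h)]
  ring

lemma abs_Cf_le (t : ℝ) : |Cf t| ≤ 1 := by
  rw [Cf, abs_div, abs_of_pos (denom_pos t), div_le_one (denom_pos t), abs_le]
  constructor <;> nlinarith [sq_nonneg t]

lemma abs_Sf_le (t : ℝ) : |Sf t| ≤ 1 := by
  rw [Sf, abs_div, abs_of_pos (denom_pos t), div_le_one (denom_pos t), abs_le]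
  constructor <;> nlinarith [sq_nonneg (t-1), sq_nonneg (t+1)]

lemma Cf_zero : Cf 0 = 1 := by norm_num [Cf]
lemma Sf_zero : Sf 0 = 0 := by norm_num [Sf]
lemma Cf_one : Cf 1 = 0 := by norm_num [Cf]
lemma Sf_one : Sf 1 = 1 := by norm_num [Sf]

lemma Cf_lip {t t' : ℝ} (h : 0 ≤ t) (h' : 0 ≤ t') (h1 : t ≤ 1) (h1' : t' ≤ 1) :
    |Cf t - Cf t'| ≤ 4 * |t - t'| := by
  have hD : (1:ℝ) ≤ (1+t^2)*(1+t'^2) := by nlinarith [sq_nonneg t, sq_nonneg t']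
  have key : Cf t - Cf t' = (2*(t' - t)*(t'+t))/((1+t^2)*(1+t'^2)) := by
    rw [Cf, Cf, div_sub_div _ _ (denom_pos t).ne' (denom_pos t').ne']
    congr 1
    ring
  rw [key, abs_div]
  have habs : |2*(t' - t)*(t'+t)| ≤ 4 * |t - t'| := by
    rw [abs_mul, abs_mul]
    have h2 : |t' + t| ≤ 2 := by rw [abs_le]; constructor <;> linarith
    have h3 : |t' - t| = |t - t'| := abs_sub_comm _ _
    have h4 : |(2:ℝ)| = 2 := by norm_num
    rw [h3, h4]
    nlinarith [abs_nonneg (t - t'), abs_nonneg (t' + t)]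
  have hD' : (1:ℝ) ≤ |(1+t^2)*(1+t'^2)| := le_trans hD (le_abs_self _)
  calc |2*(t' - t)*(t'+t)| / |(1+t^2)*(1+t'^2)| ≤ |2*(t' - t)*(t'+t)| :=
        div_le_self (abs_nonneg _) hD'
  _ ≤ 4 * |t - t'| := habs

lemma Sf_lip {t t' : ℝ} (h : 0 ≤ t) (h' : 0 ≤ t') (h1 : t ≤ 1) (h1' : t' ≤ 1) :
    |Sf t - Sf t'| ≤ 2 * |t - t'| := by
  have hD : (1:ℝ) ≤ (1+t^2)*(1+t'^2) := by nlinarith [sq_nonneg t, sq_nonneg t']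
  have key : Sf t - Sf t' = (2*(t - t')*(1 - t*t'))/((1+t^2)*(1+t'^2)) := by
    rw [Sf, Sf, div_sub_div _ _ (denom_pos t).ne' (denom_pos t').ne']
    congr 1
    ring
  rw [key, abs_div]
  have habs : |2*(t - t')*(1 - t*t')| ≤ 2 * |t - t'| := by
    rw [abs_mul, abs_mul]
    have h2 : |1 - t*t'| ≤ 1 := by
      rw [abs_le]; constructor <;> nlinarith
    have h4 : |(2:ℝ)| = 2 := by norm_num
    rw [h4]
    nlinarith [abs_nonneg (t - t')]
  have hD' : (1:ℝ) ≤ |(1+t^2)*(1+t'^2)| := le_trans hD (le_abs_self _)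
  calc |2*(t - t')*(1 - t*t')| / |(1+t^2)*(1+t'^2)| ≤ |2*(t - t')*(1 - t*t')| :=
        div_le_self (abs_nonneg _) hD'
  _ ≤ 2 * |t - t'| := habs

/-- An upper Bernoulli bound. -/
lemma pow_one_add_le (δ : ℝ) (hδ : 0 ≤ δ) :
    ∀ (k : ℕ), 2*(k:ℝ)*δ ≤ 1 → (1+δ)^k ≤ 1+2*(k:ℝ)*δ := by
  intro k
  induction k with
  | zero => simp
  | succ k ih =>
    intro h
    have hcast : ((k+1 : ℕ) : ℝ) = (k:ℝ) + 1 := by push_cast; ring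
    rw [hcast] at h ⊢
    have hk : 2*(k:ℝ)*δ ≤ 1 := by nlinarith [Nat.cast_nonneg (α := ℝ) k]
    have h1 := ih hk
    have h2 : (1+δ)^(k+1) = (1+δ)^k * (1+δ) := pow_succ _ _
    rw [h2]
    nlinarith [pow_nonneg (by linarith : (0:ℝ) ≤ 1+δ) k, Nat.cast_nonneg (α := ℝ) k]

section QW

variable {α β γ : Type*} [Fintype α] [Fintype β] [Fintype γ]
variable [DecidableEq α]
set_option linter.unusedSectionVars false

/-- The "2×2 coefficient matrix tensor identity" rectangular matrix. -/
def QW (e : α × Fin 2 ≃ β) (w : Fin 2 → Fin 2 → ℝ) (c : Fin 2) : Matrix α β ℝ :=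
  Matrix.of fun p t => if (e.symm t).1 = p then w c (e.symm t).2 else 0

lemma QW_rows (e : α × Fin 2 ≃ β) (w : Fin 2 → Fin 2 → ℝ) (c c' : Fin 2) (p p' : α) :
    ∑ t, QW e w c p t * QW e w c' p' t
      = (if p = p' then 1 else 0) * (∑ h, w c h * w c' h) := by
  rw [← Equiv.sum_comp e (fun t => QW e w c p t * QW e w c' p' t), Fintype.sum_prod_type]
  simp only [QW, Matrix.of_apply, Equiv.symm_apply_apply]
  have key : ∀ p₀ : α, (∑ h : Fin 2,
      (if p₀ = p then w c h else 0) * (if p₀ = p' then w c' h else 0))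
      = if p₀ = p then (if p = p' then ∑ h, w c h * w c' h else 0) else 0 := by
    intro p₀
    by_cases h1 : p₀ = p
    · subst h1
      by_cases h2 : p₀ = p' <;> simp [h2, Finset.mul_sum]
    · simp [h1]
  rw [Finset.sum_congr rfl (fun p₀ _ => key p₀), Finset.sum_ite_eq' Finset.univ p
    (fun _ => if p = p' then ∑ h, w c h * w c' h else 0)]
  simp only [Finset.mem_univ, if_true]
  by_cases h2 : p = p' <;> simp [h2]

lemma QW_mulVec (e : α × Fin 2 ≃ β) (w : Fin 2 → Fin 2 → ℝ) (c : Fin 2) (x : β → ℝ) (p : α) :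
    (QW e w c).mulVec x p = ∑ h, w c h * x (e (p, h)) := by
  simp only [Matrix.mulVec, dotProduct, QW, Matrix.of_apply]
  rw [← Equiv.sum_comp e (fun t => (if (e.symm t).1 = p then w c (e.symm t).2 else 0) * x t),
    Fintype.sum_prod_type]
  simp only [Equiv.symm_apply_apply]
  have key : ∀ p₀ : α, (∑ h : Fin 2, (if p₀ = p then w c h else 0) * x (e (p₀, h)))
      = if p₀ = p then ∑ h : Fin 2, w c h * x (e (p₀, h)) else 0 := by
    intro p₀
    by_cases h1 : p₀ = p <;> simp [h1, Finset.mul_sum]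
  rw [Finset.sum_congr rfl (fun p₀ _ => key p₀), Finset.sum_ite_eq' Finset.univ p]
  simp

lemma sum_sq_split (e : α × Fin 2 ≃ β) (x : β → ℝ) :
    ∑ t, x t ^ 2 = (∑ p, x (e (p, 0)) ^ 2) + (∑ p, x (e (p, 1)) ^ 2) := by
  rw [← Equiv.sum_comp e (fun t => x t ^ 2), Fintype.sum_prod_type, ← Finset.sum_add_distrib]
  exact Finset.sum_congr rfl fun p _ => by rw [Fin.sum_univ_two]

lemma rowsum_mul (A B : Matrix γ α ℝ) (Q Q' : Matrix α β ℝ) (z : ℝ)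
    (hQ : ∀ p q, ∑ t, Q p t * Q' q t = if p = q then z else 0) (a b : γ) :
    ∑ t, (A * Q) a t * (B * Q') b t = z * ∑ p, A a p * B b p := by
  simp only [Matrix.mul_apply]
  calc ∑ t, (∑ p, A a p * Q p t) * (∑ q, B b q * Q' q t)
      = ∑ t, ∑ p, ∑ q, (A a p * B b q) * (Q p t * Q' q t) := by
        refine Finset.sum_congr rfl fun t _ => ?_
        rw [Finset.sum_mul_sum]
        exact Finset.sum_congr rfl fun p _ => Finset.sum_congr rfl fun q _ => by ring
    _ = ∑ p, ∑ q, ∑ t, (A a p * B b q) * (Q p t * Q' q t) := by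
        rw [Finset.sum_comm]
        exact Finset.sum_congr rfl fun p _ => Finset.sum_comm
    _ = ∑ p, ∑ q, (A a p * B b q) * (if p = q then z else 0) := by
        refine Finset.sum_congr rfl fun p _ => Finset.sum_congr rfl fun q _ => ?_
        rw [← Finset.mul_sum, hQ p q]
    _ = ∑ p, (A a p * B b p) * z := by
        refine Finset.sum_congr rfl fun p _ => ?_
        rw [Finset.sum_eq_single p (fun q _ hq => by rw [if_neg (fun h => hq h.symm), mul_zero])
          (fun h => absurd (Finset.mem_univ p) h)]
        rw [if_pos rfl]
    _ = z * ∑ p, A a p * B b p := by rw [Finset.mul_sum]; exact Finset.sum_congr rfl fun p _ => by ring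

end QW

noncomputable def coefW (θ : ℝ) : Fin 2 → Fin 2 → ℝ := fun c h =>
  if c = 0 then (if h = 0 then Cf θ else Sf θ) else (if h = 0 then -(Sf θ) else Cf θ)

lemma coefW_orth (θ : ℝ) (c c' : Fin 2) :
    ∑ h, coefW θ c h * coefW θ c' h = if c = c' then 1 else 0 := by
  have hcs := Cf_sq_add_Sf_sq θ
  fin_cases c <;> fin_cases c' <;>
    simp [coefW, Fin.sum_univ_two] <;> nlinarith [hcs]

def e2def (s k : ℕ) : (Fin (s*2^k) × Fin 2) ≃ Fin (s * 2^(k+1)) :=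
  finProdFinEquiv.trans (finCongr (by rw [pow_succ, mul_assoc]))

def eIdef (k : ℕ) : (Fin (2^k) × Fin 2) ≃ Fin (2^(k+1)) :=
  finProdFinEquiv.trans (finCongr (pow_succ 2 k).symm)

noncomputable def Qmat (s k : ℕ) (θ : ℝ) (c : Fin 2) :
    Matrix (Fin (s*2^k)) (Fin (s * 2^(k+1))) ℝ :=
  QW (e2def s k) (coefW θ) c

lemma Qmat_rows (s k : ℕ) (θ : ℝ) (c c' : Fin 2) (p p' : Fin (s*2^k)) :
    ∑ t, Qmat s k θ c p t * Qmat s k θ c' p' t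
      = if p = p' then (if c = c' then 1 else 0) else 0 := by
  rw [Qmat, Qmat, QW_rows, coefW_orth]
  by_cases h : p = p' <;> simp [h]

noncomputable def buildP (s k : ℕ) (R : Fin 2 → Fin (2^k) → Matrix (Fin s) (Fin (s*2^k)) ℝ)
    (θ : ℝ) : Fin (2^(k+1)) → Matrix (Fin s) (Fin (s * 2^(k+1))) ℝ :=
  fun i => R ((eIdef k).symm i).2 ((eIdef k).symm i).1 * Qmat s k θ ((eIdef k).symm i).2

lemma buildP_orth (s k : ℕ) (R : Fin 2 → Fin (2^k) → Matrix (Fin s) (Fin (s*2^k)) ℝ) (θ : ℝ)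
    (hR : ∀ (c : Fin 2) (i : Fin (2^k)) (a : Fin s) (j : Fin (2^k)) (b : Fin s),
      ∑ p, R c i a p * R c j b p = if i = j ∧ a = b then 1 else 0)
    (i : Fin (2^(k+1))) (a : Fin s) (j : Fin (2^(k+1))) (b : Fin s) :
    ∑ t, buildP s k R θ i a t * buildP s k R θ j b t = if i = j ∧ a = b then 1 else 0 := by
  simp only [buildP]
  set qi := (eIdef k).symm i with hqi
  set qj := (eIdef k).symm j with hqj
  have hij : i = j ↔ qi = qj := by
    rw [hqi, hqj]
    exact ⟨fun h => by rw [h], fun h => (eIdef k).symm.injective h⟩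
  by_cases hcc : qi.2 = qj.2
  · have key := rowsum_mul (R qi.2 qi.1) (R qj.2 qj.1) (Qmat s k θ qi.2) (Qmat s k θ qj.2)
      (if qi.2 = qj.2 then 1 else 0)
      (fun p q => by rw [Qmat_rows]) a b
    rw [key, if_pos hcc, one_mul, hcc, hR qj.2 qi.1 a qj.1 b]
    have h1 : (i = j) ↔ (qi.1 = qj.1) := by
      rw [hij]
      constructor
      · intro h; rw [h]
      · intro h; exact Prod.ext h hcc
    simp only [h1]
  · have key := rowsum_mul (R qi.2 qi.1) (R qj.2 qj.1) (Qmat s k θ qi.2) (Qmat s k θ qj.2)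
      (if qi.2 = qj.2 then 1 else 0)
      (fun p q => by rw [Qmat_rows]) a b
    rw [key, if_neg hcc, zero_mul]
    have : ¬ (i = j ∧ a = b) := by
      rintro ⟨h1, -⟩
      exact hcc (by rw [hij.mp h1])
    rw [if_neg this]

lemma sum_sq_lin {ι : Type*} [Fintype ι] (C S : ℝ) (u v : ι → ℝ) :
    ∑ p, (C * u p + S * v p)^2
      = C^2 * (∑ p, u p ^2) + S^2 * (∑ p, v p ^2) + 2*C*S*(∑ p, u p * v p) := by
  have h : ∀ p : ι, (C * u p + S * v p)^2
      = C^2 * u p^2 + S^2 * v p^2 + 2*C*S*(u p * v p) := fun p => by ring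
  simp_rw [h]
  rw [Finset.sum_add_distrib, Finset.sum_add_distrib, ← Finset.mul_sum, ← Finset.mul_sum,
    ← Finset.mul_sum]

lemma abs_sum_mul_le {ι : Type*} [Fintype ι] (u v : ι → ℝ) :
    |∑ p, u p * v p| ≤ ((∑ p, u p ^2) + (∑ p, v p ^2))/2 := by
  calc |∑ p, u p * v p| ≤ ∑ p, |u p * v p| := Finset.abs_sum_le_sum_abs _ _
  _ ≤ ∑ p, (u p ^2 + v p ^2)/2 := by
      refine Finset.sum_le_sum fun p _ => ?_
      rw [abs_mul]
      nlinarith [sq_nonneg (|u p| - |v p|), sq_abs (u p), sq_abs (v p),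
        abs_nonneg (u p), abs_nonneg (v p)]
  _ = ((∑ p, u p ^2) + (∑ p, v p ^2))/2 := by
      rw [← Finset.sum_add_distrib, Finset.sum_div]

lemma quad_diff_bound (C1 S1 C2 S2 a b ip L M : ℝ) (ha : 0 ≤ a) (hb : 0 ≤ b)
    (hip : |ip| ≤ (a+b)/2) (hC1 : |C1| ≤ 1) (hC2 : |C2| ≤ 1) (hS1 : |S1| ≤ 1) (hS2 : |S2| ≤ 1)
    (hdC : |C2 - C1| ≤ L) (hdS : |S2 - S1| ≤ M) :
    |(C2^2 - C1^2)*a + (S2^2 - S1^2)*b + 2*(C2*S2 - C1*S1)*ip|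
      ≤ (3*L+M)*a + (L+3*M)*b := by
  have hL0 : 0 ≤ L := le_trans (abs_nonneg _) hdC
  have hM0 : 0 ≤ M := le_trans (abs_nonneg _) hdS
  have e1 : |C2^2 - C1^2| ≤ 2*L := by
    have h : C2^2 - C1^2 = (C2 - C1)*(C2 + C1) := by ring
    rw [h, abs_mul]
    have h2 : |C2 + C1| ≤ 2 := (abs_add_le _ _).trans (by linarith)
    calc |C2 - C1| * |C2 + C1| ≤ L * 2 := mul_le_mul hdC h2 (abs_nonneg _) hL0
    _ = 2*L := by ring
  have e2 : |S2^2 - S1^2| ≤ 2*M := by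
    have h : S2^2 - S1^2 = (S2 - S1)*(S2 + S1) := by ring
    rw [h, abs_mul]
    have h2 : |S2 + S1| ≤ 2 := (abs_add_le _ _).trans (by linarith)
    calc |S2 - S1| * |S2 + S1| ≤ M * 2 := mul_le_mul hdS h2 (abs_nonneg _) hM0
    _ = 2*M := by ring
  have e3 : |C2*S2 - C1*S1| ≤ M + L := by
    have h : C2*S2 - C1*S1 = C2*(S2 - S1) + S1*(C2 - C1) := by ring
    rw [h]
    calc |C2*(S2 - S1) + S1*(C2 - C1)| ≤ |C2*(S2-S1)| + |S1*(C2-C1)| := abs_add_le _ _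
    _ = |C2| * |S2 - S1| + |S1| * |C2 - C1| := by rw [abs_mul, abs_mul]
    _ ≤ 1*M + 1*L := by
        gcongr <;> first | exact hC2 | exact hS1 | exact hdS | exact hdC
    _ = M + L := by ring
  calc |(C2^2 - C1^2)*a + (S2^2 - S1^2)*b + 2*(C2*S2 - C1*S1)*ip|
      ≤ |(C2^2 - C1^2)*a + (S2^2 - S1^2)*b| + |2*(C2*S2 - C1*S1)*ip| := abs_add_le _ _
  _ ≤ (|(C2^2 - C1^2)*a| + |(S2^2 - S1^2)*b|) + |2*(C2*S2 - C1*S1)*ip| := by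
      gcongr; exact abs_add_le _ _
  _ = |C2^2 - C1^2| * a + |S2^2 - S1^2| * b + 2 * |C2*S2 - C1*S1| * |ip| := by
      rw [abs_mul, abs_mul, abs_mul, abs_mul, abs_of_nonneg ha, abs_of_nonneg hb]
      norm_num
  _ ≤ (2*L)*a + (2*M)*b + 2*(M+L)*((a+b)/2) := by
      have q1 : |C2^2 - C1^2| * a ≤ (2*L)*a := mul_le_mul_of_nonneg_right e1 ha
      have q2 : |S2^2 - S1^2| * b ≤ (2*M)*b := mul_le_mul_of_nonneg_right e2 hb
      have q3 : |C2*S2 - C1*S1| * |ip| ≤ (M+L)*((a+b)/2) :=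
        mul_le_mul e3 hip (abs_nonneg _) (by linarith)
      linarith
  _ ≤ (3*L+M)*a + (L+3*M)*b := by nlinarith

lemma half_bounds_lemma (d X w : ℝ) (hd0 : 0 ≤ d) (hd1 : d ≤ 1) (hX : 0 ≤ X)
    (hw1 : X/2 - (d/2)*X ≤ w) (hw2 : w ≤ X/2 + (d/2)*X) :
    (1-d) * Real.sqrt X ≤ Real.sqrt 2 * Real.sqrt w
      ∧ Real.sqrt 2 * Real.sqrt w ≤ (1+d) * Real.sqrt X := by
  constructor
  · have l1 : (1-d)^2 * X ≤ 2 * w := by nlinarith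
    have h := Real.sqrt_le_sqrt l1
    rwa [Real.sqrt_mul (sq_nonneg _), Real.sqrt_sq (by linarith),
      Real.sqrt_mul (by norm_num : (0:ℝ) ≤ 2)] at h
  · have u1 : 2 * w ≤ (1+d)^2 * X := by nlinarith
    have h := Real.sqrt_le_sqrt u1
    rwa [Real.sqrt_mul (by norm_num : (0:ℝ) ≤ 2),
      Real.sqrt_mul (sq_nonneg _), Real.sqrt_sq (by linarith)] at h

lemma main_split :
    ∀ (k s m n : ℕ), m = 2^k → n = s * m →
    ∀ (δ : ℝ) (T : ℕ), 0 < δ → δ ≤ 1 → (28:ℝ) ≤ δ * T →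
    ∃ F : Finset (Fin m → Matrix (Fin s) (Fin n) ℝ),
      (∀ P ∈ F, ∀ (i : Fin m) (a : Fin s) (j : Fin m) (b : Fin s),
        (∑ t, P i a t * P j b t) = if i = j ∧ a = b then 1 else 0) ∧
      F.card ≤ (T+1)^(m - 1) ∧
      (∀ x : Fin n → ℝ, ∃ P ∈ F, ∀ i : Fin m,
        (1-δ)^k * Real.sqrt (∑ j, x j ^ 2)
            ≤ Real.sqrt ((2:ℝ)^k) * Real.sqrt (∑ a, ((P i).mulVec x) a ^ 2) ∧
        Real.sqrt ((2:ℝ)^k) * Real.sqrt (∑ a, ((P i).mulVec x) a ^ 2)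
            ≤ (1+δ)^k * Real.sqrt (∑ j, x j ^ 2)) := by
  intro k
  induction k with
  | zero =>
    intro s m n hm hn δ T hδ hδ1 hδT
    subst hm; subst hn
    have e0 : Fin s ≃ Fin (s * 2^0) := finCongr (by norm_num)
    refine ⟨{fun _ => Matrix.of fun a t => if t = e0 a then 1 else 0}, ?_, ?_, ?_⟩
    · intro P hP i a j b
      rw [Finset.mem_singleton] at hP
      subst hP
      have hij : i = j := by
        have h1 := i.isLt
        have h2 := j.isLt
        norm_num at h1 h2
        exact Fin.ext (by omega)
      simp only [Matrix.of_apply]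
      have key : ∀ t, (if t = e0 a then (1:ℝ) else 0) * (if t = e0 b then 1 else 0)
          = if t = e0 a then (if e0 a = e0 b then 1 else 0) else 0 := by
        intro t
        by_cases h : t = e0 a
        · subst h; simp
        · rw [if_neg h, zero_mul, if_neg h]
      rw [Finset.sum_congr rfl fun t _ => key t, Finset.sum_ite_eq' Finset.univ (e0 a)]
      simp [Equiv.apply_eq_iff_eq, hij]
    · simp
    · intro x
      refine ⟨_, Finset.mem_singleton_self _, fun i => ?_⟩
      have hmv : ∀ c : Fin s,
          (Matrix.of fun (a : Fin s) (t : Fin (s*2^0)) =>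
            if t = e0 a then (1:ℝ) else 0).mulVec x c = x (e0 c) := by
        intro c
        simp only [Matrix.mulVec, dotProduct, Matrix.of_apply]
        have key : ∀ t, (if t = e0 c then (1:ℝ) else 0) * x t
            = if t = e0 c then x t else 0 := by
          intro t; by_cases h : t = e0 c <;> simp [h]
        rw [Finset.sum_congr rfl fun t _ => key t, Finset.sum_ite_eq' Finset.univ (e0 c)]
        simp
      have hsum : (∑ c, ((Matrix.of fun (a : Fin s) (t : Fin (s*2^0)) =>
          if t = e0 a then (1:ℝ) else 0).mulVec x) c ^ 2) = ∑ t, x t ^ 2 := by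
        simp_rw [hmv]
        exact Equiv.sum_comp e0 (fun t => x t ^ 2)
      constructor
      · simp only [pow_zero, one_mul, Real.sqrt_one]
        exact le_of_eq (by rw [hsum])
      · simp only [pow_zero, one_mul, Real.sqrt_one]
        exact le_of_eq (by rw [hsum])
  | succ k ih =>
    intro s m n hm hn δ T hδ hδ1 hδT
    subst hm; subst hn
    classical
    obtain ⟨F₀, hO, hC, hS⟩ := ih s (2^k) (s * 2^k) rfl rfl δ T hδ hδ1 hδT
    have hTpos : (0:ℝ) < T := by
      rcases Nat.eq_zero_or_pos T with h | h
      · subst h; simp at hδT; linarith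
      · exact_mod_cast h
    set e2 := e2def s k with he2
    set bld : ((Fin (2^k) → Matrix (Fin s) (Fin (s*2^k)) ℝ)
        × (Fin (2^k) → Matrix (Fin s) (Fin (s*2^k)) ℝ)) × ℕ
        → (Fin (2^(k+1)) → Matrix (Fin s) (Fin (s*2^(k+1))) ℝ) :=
      fun z => buildP s k ![z.1.1, z.1.2] ((z.2 : ℝ)/(T:ℝ)) with hbld
    refine ⟨((F₀ ×ˢ F₀) ×ˢ Finset.range (T+1)).image bld, ?_, ?_, ?_⟩
    · intro P hP
      rw [Finset.mem_image] at hP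
      obtain ⟨z, hz, rfl⟩ := hP
      rw [Finset.mem_product, Finset.mem_product] at hz
      refine buildP_orth s k _ _ (fun c i' a j' b => ?_)
      fin_cases c
      · simpa using hO z.1.1 hz.1.1 i' a j' b
      · simpa using hO z.1.2 hz.1.2 i' a j' b
    · calc (((F₀ ×ˢ F₀) ×ˢ Finset.range (T+1)).image bld).card
          ≤ ((F₀ ×ˢ F₀) ×ˢ Finset.range (T+1)).card := Finset.card_image_le
      _ = F₀.card * F₀.card * (T+1) := by
          rw [Finset.card_product, Finset.card_product, Finset.card_range]
      _ ≤ (T+1)^(2^k - 1) * (T+1)^(2^k - 1) * (T+1) :=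
          Nat.mul_le_mul (Nat.mul_le_mul hC hC) (le_refl _)
      _ = (T+1)^(2^(k+1) - 1) := by
          rw [← pow_add, ← pow_succ]
          congr 1
          have h1 : 1 ≤ 2^k := Nat.one_le_two_pow
          have h2 : 2^(k+1) = 2^k + 2^k := by rw [pow_succ]; ring
          omega
    · intro x
      set u : Fin (s*2^k) → ℝ := fun p => x (e2 (p, 0)) with hu
      set v : Fin (s*2^k) → ℝ := fun p => x (e2 (p, 1)) with hv
      set a := ∑ p, u p ^ 2 with ha
      set b := ∑ p, v p ^ 2 with hb
      set ip := ∑ p, u p * v p with hip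
      have hX : ∑ t, x t ^ 2 = a + b := sum_sq_split e2 x
      have ha0 : 0 ≤ a := Finset.sum_nonneg fun p _ => sq_nonneg _
      have hb0 : 0 ≤ b := Finset.sum_nonneg fun p _ => sq_nonneg _
      have hip_le : |ip| ≤ (a+b)/2 := abs_sum_mul_le u v
      set g : ℕ → ℝ := fun r =>
        Cf ((r:ℝ)/(T:ℝ))^2 * a + Sf ((r:ℝ)/(T:ℝ))^2 * b
          + 2*Cf ((r:ℝ)/(T:ℝ))*Sf ((r:ℝ)/(T:ℝ))*ip with hgdef
      have hg0 : g 0 = a := by simp [hgdef, Cf_zero, Sf_zero]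
      have hgT : g T = b := by
        have h1 : (T:ℝ)/(T:ℝ) = 1 := div_self hTpos.ne'
        simp [hgdef, h1, Cf_one, Sf_one]
      have hstep : ∀ r < T, |g (r+1) - g r| ≤ (δ/2) * (a+b) := by
        intro r hr
        set t1 : ℝ := (r:ℝ)/(T:ℝ) with ht1
        set t2 : ℝ := ((r+1:ℕ):ℝ)/(T:ℝ) with ht2
        have ht10 : 0 ≤ t1 := by positivity
        have ht11 : t1 ≤ 1 := by
          rw [ht1, div_le_one hTpos]
          exact_mod_cast hr.le
        have ht20 : 0 ≤ t2 := by positivity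
        have ht21 : t2 ≤ 1 := by
          rw [ht2, div_le_one hTpos]
          exact_mod_cast hr
        have hdt : |t2 - t1| = 1/(T:ℝ) := by
          rw [ht1, ht2]
          push_cast
          rw [div_sub_div_same]
          rw [show (r:ℝ) + 1 - r = 1 by ring]
          rw [abs_of_nonneg (by positivity)]
        have hdiff : g (r+1) - g r
            = (Cf t2^2 - Cf t1^2)*a + (Sf t2^2 - Sf t1^2)*b
              + 2*(Cf t2*Sf t2 - Cf t1*Sf t1)*ip := by
          simp only [hgdef, ht1, ht2]
          push_cast
          ring
        rw [hdiff]
        have hq := quad_diff_bound (Cf t1) (Sf t1) (Cf t2) (Sf t2) a b ip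
          (4/(T:ℝ)) (2/(T:ℝ)) ha0 hb0 hip_le (abs_Cf_le t1) (abs_Cf_le t2)
          (abs_Sf_le t1) (abs_Sf_le t2)
          (by rw [show (4:ℝ)/(T:ℝ) = 4 * (1/(T:ℝ)) by ring, ← hdt]
              exact Cf_lip ht20 ht10 ht21 ht11)
          (by rw [show (2:ℝ)/(T:ℝ) = 2 * (1/(T:ℝ)) by ring, ← hdt]
              exact Sf_lip ht20 ht10 ht21 ht11)
        refine le_trans hq ?_
        have h14 : 14/(T:ℝ) ≤ δ/2 := by
          rw [div_le_div_iff₀ hTpos (by norm_num : (0:ℝ) < 2)]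
          linarith
        have hc1 : (3*(4/(T:ℝ))+(2/(T:ℝ))) = 14/(T:ℝ) := by ring
        have hc2 : ((4/(T:ℝ))+3*(2/(T:ℝ))) = 10/(T:ℝ) := by ring
        rw [hc1, hc2]
        have h10 : 10/(T:ℝ) ≤ δ/2 := by
          rw [div_le_div_iff₀ hTpos (by norm_num : (0:ℝ) < 2)]
          linarith
        have q1 : 14/(T:ℝ) * a ≤ (δ/2) * a := mul_le_mul_of_nonneg_right h14 ha0
        have q2 : 10/(T:ℝ) * b ≤ (δ/2) * b := mul_le_mul_of_nonneg_right h10 hb0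
        linarith
      have hmid : ∃ r ≤ T, |g r - (a+b)/2| ≤ (δ/2)*(a+b) := by
        apply ivt_between _ _ (by positivity) T g hstep
        rcases le_total a b with h | h
        · left; rw [hg0, hgT]; constructor <;> linarith
        · right; rw [hg0, hgT]; constructor <;> linarith
      obtain ⟨r, hrT, hgr⟩ := hmid
      rw [abs_le] at hgr
      set θ : ℝ := (r:ℝ)/(T:ℝ) with hθ
      set y0 := (Qmat s k θ 0).mulVec x with hy0def
      set y1 := (Qmat s k θ 1).mulVec x with hy1def
      have hgval : g r = Cf θ^2 * a + Sf θ^2 * b + 2*Cf θ*Sf θ*ip := rfl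
      have hy0 : ∑ p, y0 p ^ 2 = g r := by
        have h1 : ∀ p, y0 p = Cf θ * u p + Sf θ * v p := by
          intro p
          rw [hy0def, Qmat, QW_mulVec, Fin.sum_univ_two]
          simp [coefW, hu, hv, he2]
        simp_rw [h1]
        rw [sum_sq_lin, hgval]
      have hy1 : ∑ p, y1 p ^ 2 = (a+b) - g r := by
        have h1 : ∀ p, y1 p = (-(Sf θ)) * u p + Cf θ * v p := by
          intro p
          rw [hy1def, Qmat, QW_mulVec, Fin.sum_univ_two]
          simp [coefW, hu, hv, he2]
        simp_rw [h1]
        rw [sum_sq_lin, hgval]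
        linear_combination (a+b) * Cf_sq_add_Sf_sq θ
      have hb0' := half_bounds_lemma δ (a+b) (g r) hδ.le hδ1 (by linarith)
        (by linarith) (by linarith)
      have hb1' := half_bounds_lemma δ (a+b) ((a+b) - g r) hδ.le hδ1 (by linarith)
        (by linarith) (by linarith)
      obtain ⟨R0, hR0, hR0s⟩ := hS y0
      obtain ⟨R1, hR1, hR1s⟩ := hS y1
      refine ⟨bld ((R0, R1), r), Finset.mem_image_of_mem _ ?_, ?_⟩
      · rw [Finset.mem_product]
        exact ⟨Finset.mem_product.mpr ⟨hR0, hR1⟩, Finset.mem_range.mpr (by omega)⟩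
      intro i
      set c := ((eIdef k).symm i).2 with hc
      set i1 := ((eIdef k).symm i).1 with hi1
      have hmv : (bld ((R0,R1), r) i).mulVec x
          = (![R0,R1] c i1).mulVec ((Qmat s k θ c).mulVec x) := by
        simp only [hbld, buildP, ← hc, ← hi1, hθ]
        rw [Matrix.mulVec_mulVec]
      -- the key chaining step
      have key : ∀ (y : Fin (s*2^k) → ℝ) (Ri : Matrix (Fin s) (Fin (s*2^k)) ℝ),
          ((1-δ)^k * Real.sqrt (∑ p, y p ^2)
              ≤ Real.sqrt ((2:ℝ)^k) * Real.sqrt (∑ a', (Ri.mulVec y) a' ^2)) →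
          (Real.sqrt ((2:ℝ)^k) * Real.sqrt (∑ a', (Ri.mulVec y) a' ^2)
              ≤ (1+δ)^k * Real.sqrt (∑ p, y p ^2)) →
          ((1-δ) * Real.sqrt (a+b) ≤ Real.sqrt 2 * Real.sqrt (∑ p, y p ^2)) →
          (Real.sqrt 2 * Real.sqrt (∑ p, y p ^2) ≤ (1+δ) * Real.sqrt (a+b)) →
          ((1-δ)^(k+1) * Real.sqrt (∑ t, x t ^2)
              ≤ Real.sqrt ((2:ℝ)^(k+1)) * Real.sqrt (∑ a', (Ri.mulVec y) a' ^2)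
            ∧ Real.sqrt ((2:ℝ)^(k+1)) * Real.sqrt (∑ a', (Ri.mulVec y) a' ^2)
              ≤ (1+δ)^(k+1) * Real.sqrt (∑ t, x t ^2)) := by
        intro y Ri h1 h2 h3 h4
        have hsq : Real.sqrt ((2:ℝ)^(k+1)) = Real.sqrt ((2:ℝ)^k) * Real.sqrt 2 := by
          rw [pow_succ, Real.sqrt_mul (by positivity)]
        have hXeq : Real.sqrt (∑ t, x t ^2) = Real.sqrt (a+b) := by rw [hX]
        constructor
        · calc (1-δ)^(k+1) * Real.sqrt (∑ t, x t ^2)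
              = (1-δ)^k * ((1-δ) * Real.sqrt (a+b)) := by rw [hXeq]; ring
          _ ≤ (1-δ)^k * (Real.sqrt 2 * Real.sqrt (∑ p, y p ^2)) :=
              mul_le_mul_of_nonneg_left h3 (pow_nonneg (by linarith) k)
          _ = Real.sqrt 2 * ((1-δ)^k * Real.sqrt (∑ p, y p ^2)) := by ring
          _ ≤ Real.sqrt 2 * (Real.sqrt ((2:ℝ)^k) * Real.sqrt (∑ a', (Ri.mulVec y) a' ^2)) :=
              mul_le_mul_of_nonneg_left h1 (Real.sqrt_nonneg 2)
          _ = Real.sqrt ((2:ℝ)^(k+1)) * Real.sqrt (∑ a', (Ri.mulVec y) a' ^2) := by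
              rw [hsq]; ring
        · calc Real.sqrt ((2:ℝ)^(k+1)) * Real.sqrt (∑ a', (Ri.mulVec y) a' ^2)
              = Real.sqrt 2 * (Real.sqrt ((2:ℝ)^k) * Real.sqrt (∑ a', (Ri.mulVec y) a' ^2)) := by
                rw [hsq]; ring
          _ ≤ Real.sqrt 2 * ((1+δ)^k * Real.sqrt (∑ p, y p ^2)) :=
              mul_le_mul_of_nonneg_left h2 (Real.sqrt_nonneg 2)
          _ = (1+δ)^k * (Real.sqrt 2 * Real.sqrt (∑ p, y p ^2)) := by ring
          _ ≤ (1+δ)^k * ((1+δ) * Real.sqrt (a+b)) :=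
              mul_le_mul_of_nonneg_left h4 (pow_nonneg (by linarith) k)
          _ = (1+δ)^(k+1) * Real.sqrt (∑ t, x t ^2) := by rw [hXeq]; ring
      by_cases hcase : c = 0
      · have hmv' : (bld ((R0,R1), r) i).mulVec x = (R0 i1).mulVec y0 := by
          rw [hmv, hcase, hy0def]
          simp
        rw [hmv']
        refine key y0 (R0 i1) (hR0s i1).1 (hR0s i1).2 ?_ ?_
        · rw [hy0]; exact hb0'.1
        · rw [hy0]; exact hb0'.2
      · have hc1 : c = 1 := by omega
        have hmv' : (bld ((R0,R1), r) i).mulVec x = (R1 i1).mulVec y1 := by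
          rw [hmv, hc1, hy1def]
          simp
        rw [hmv']
        refine key y1 (R1 i1) (hR1s i1).1 (hR1s i1).2 ?_ ?_
        · rw [hy1]; exact hb1'.1
        · rw [hy1]; exact hb1'.2

set_option maxHeartbeats 1600000 in
/-- There is a universal constant `K` such that for all `0 < ε < 1/2` and powers of two
`d' ∣ d` with `d' ≥ K/ε²`, there is a collection `Ps` of orthogonal decompositions of `ℝ^d`
into `ℝ^{d'}` with `|Ps| ≤ d^{K·d/d'}` such that every unit vector `x ∈ ℝ^d` is split by some
decomposition in `Ps` into components of nearly equal length:
`|√(d/d')·‖P_i x‖₂ − 1| < ε` for all `i`. -/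
theorem exists_splitting_decompositions :
    ∃ K : ℝ, 0 < K ∧ ∀ ε : ℝ, 0 < ε → ε < 1 / 2 → ∀ d d' : ℕ,
      (∃ a : ℕ, d = 2 ^ a) → (∃ b : ℕ, d' = 2 ^ b) → d' ∣ d → K / ε ^ 2 ≤ (d' : ℝ) →
      ∃ Ps : Finset (Fin (d / d') → Matrix (Fin d') (Fin d) ℝ),
        (∀ P ∈ Ps, IsOrthDecomp d d' P) ∧
        ((Ps.card : ℝ) ≤ (d : ℝ) ^ (K * (d : ℝ) / (d' : ℝ))) ∧
        ∀ x : Fin d → ℝ, Real.sqrt (∑ j, (x j) ^ 2) = 1 →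
          ∃ P ∈ Ps, ∀ i : Fin (d / d'),
            |Real.sqrt ((d : ℝ) / (d' : ℝ)) *
                Real.sqrt (∑ a, (Matrix.mulVec (P i) x a) ^ 2) - 1| < ε := by
  classical
  refine ⟨100, by norm_num, ?_⟩
  intro ε hε hε2 d d' hd hd' hdvd hKd
  obtain ⟨A, rfl⟩ := hd
  obtain ⟨B, rfl⟩ := hd'
  have hba : B ≤ A := by
    have h1 : (2:ℕ)^B ≤ 2^A := Nat.le_of_dvd (by positivity) hdvd
    exact (Nat.pow_le_pow_iff_right (by norm_num)).mp h1
  set k := A - B with hk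
  have hm : 2^A / 2^B = 2^k := by rw [hk, Nat.pow_div hba (by norm_num)]
  have hn : (2:ℕ)^A = 2^B * (2^A / 2^B) := (Nat.mul_div_cancel' hdvd).symm
  have hk0 : (0:ℝ) ≤ (k:ℝ) := Nat.cast_nonneg k
  set δ := ε / (4*((k:ℝ)+1)) with hδdef
  have hδpos : 0 < δ := by positivity
  have hδ1 : δ ≤ 1 := by
    rw [hδdef, div_le_one (by positivity)]
    nlinarith
  set T := ⌈(28:ℝ)/δ⌉₊ with hT
  have hδT : (28:ℝ) ≤ δ * T := by
    have h := Nat.le_ceil ((28:ℝ)/δ)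
    calc (28:ℝ) = δ * (28/δ) := by field_simp
    _ ≤ δ * T := mul_le_mul_of_nonneg_left h hδpos.le
  obtain ⟨F, hFo, hFc, hFs⟩ := main_split k (2^B) (2^A/2^B) (2^A) hm hn δ T hδpos hδ1 hδT
  have hdd : ((2^A:ℕ):ℝ) / ((2^B:ℕ):ℝ) = (2:ℝ)^k := by
    have habk : (2:ℕ)^A = 2^B * 2^k := by rw [← pow_add]; congr 1; omega
    rw [habk]
    push_cast
    rw [mul_comm, mul_div_assoc, div_self (by positivity), mul_one]
  have hD1 : (1:ℝ) ≤ ((2^A:ℕ):ℝ) := by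
    have : (1:ℕ) ≤ 2^A := Nat.one_le_two_pow
    exact_mod_cast this
  refine ⟨F, fun P hP => hFo P hP, ?_, ?_⟩
  · -- cardinality
    have hcard1 : (F.card : ℝ) ≤ ((T:ℝ)+1)^((2^A/2^B) - 1 : ℕ) := by
      exact_mod_cast hFc
    have hexp : (100:ℝ) * ((2^A:ℕ):ℝ) / ((2^B:ℕ):ℝ) = 100 * (2:ℝ)^k := by
      rw [mul_div_assoc, hdd]
    by_cases hkz : k = 0
    · have hm1 : 2^A/2^B = 1 := by rw [hm, hkz, pow_zero]
      have hm0 : (2^A/2^B) - 1 = 0 := by omega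
      rw [hm0, pow_zero] at hcard1
      calc (F.card:ℝ) ≤ 1 := hcard1
      _ = ((2^A:ℕ):ℝ) ^ (0:ℝ) := (Real.rpow_zero _).symm
      _ ≤ ((2^A:ℕ):ℝ) ^ ((100:ℝ) * ((2^A:ℕ):ℝ) / ((2^B:ℕ):ℝ)) := by
          apply Real.rpow_le_rpow_of_exponent_le hD1
          positivity
    · -- k ≥ 1
      have hd'400 : (400:ℝ) ≤ ((2^B:ℕ):ℝ) := by
        have hsq : ε^2 ≤ 1/4 := by nlinarith
        have h4 : (400:ℝ) ≤ 100/ε^2 := by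
          rw [le_div_iff₀ (by positivity)]
          nlinarith
        linarith [hKd]
      have hεinv : 1/ε ≤ ((2^B:ℕ):ℝ) := by
        have h2 : 1/ε ≤ 100/ε^2 := by
          rw [div_le_div_iff₀ hε (by positivity)]
          nlinarith
        linarith [hKd]
      have hd'D : ((2^B:ℕ):ℝ) ≤ ((2^A:ℕ):ℝ) := by
        exact_mod_cast Nat.le_of_dvd (by positivity) hdvd
      have hεinv' : 1/ε ≤ ((2^A:ℕ):ℝ) := le_trans hεinv hd'D
      have hkD : ((k:ℝ)+1) ≤ ((2^A:ℕ):ℝ) := by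
        have h1 : k + 1 ≤ 2^A := by
          have h2 : A < 2^A := Nat.lt_two_pow_self (n := A)
          omega
        exact_mod_cast h1
      have hD114 : (114:ℝ) ≤ ((2^A:ℕ):ℝ) := by linarith
      have hTb : (T:ℝ) < 28/δ + 1 := Nat.ceil_lt_add_one (by positivity)
      have h28δ : 28/δ = 112*((k:ℝ)+1)/ε := by
        rw [hδdef]
        field_simp
        ring
      have hT3 : (T:ℝ)+1 ≤ ((2^A:ℕ):ℝ)^(3:ℕ) := by
        have h1 : 112*((k:ℝ)+1)/ε = 112*((k:ℝ)+1)*(1/ε) := by ring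
        have h2 : 112*((k:ℝ)+1)*(1/ε) ≤ 112*((2^A:ℕ):ℝ)*((2^A:ℕ):ℝ) :=
          mul_le_mul (mul_le_mul_of_nonneg_left hkD (by norm_num : (0:ℝ) ≤ 112))
            hεinv' (by positivity) (by positivity)
        have h3 : 112*((2^A:ℕ):ℝ)*((2^A:ℕ):ℝ) + 2 ≤ ((2^A:ℕ):ℝ)^(3:ℕ) := by
          nlinarith [mul_nonneg (mul_nonneg
            (by linarith : (0:ℝ) ≤ ((2^A:ℕ):ℝ) - 114)
            (by linarith : (0:ℝ) ≤ ((2^A:ℕ):ℝ)))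
            (by linarith : (0:ℝ) ≤ ((2^A:ℕ):ℝ))]
        have : (T:ℝ)+1 < 28/δ + 2 := by linarith
        rw [h28δ, h1] at this
        linarith
      calc (F.card:ℝ) ≤ ((T:ℝ)+1)^((2^A/2^B) - 1 : ℕ) := hcard1
      _ ≤ (((2^A:ℕ):ℝ)^(3:ℕ))^((2^A/2^B) - 1 : ℕ) :=
          pow_le_pow_left₀ (by positivity) hT3 _
      _ = ((2^A:ℕ):ℝ)^(3*((2^A/2^B) - 1) : ℕ) := by rw [← pow_mul]
      _ = ((2^A:ℕ):ℝ) ^ ((3*((2^A/2^B) - 1) : ℕ) : ℝ) := (Real.rpow_natCast _ _).symm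
      _ ≤ ((2^A:ℕ):ℝ) ^ ((100:ℝ) * ((2^A:ℕ):ℝ) / ((2^B:ℕ):ℝ)) := by
          rw [hexp]
          apply Real.rpow_le_rpow_of_exponent_le hD1
          have hone : 1 ≤ 2^k := Nat.one_le_two_pow
          have hnat : 3*((2^A/2^B) - 1) ≤ 100 * 2^k := by
            rw [hm]
            omega
          calc ((3*((2^A/2^B) - 1):ℕ):ℝ) ≤ ((100*2^k : ℕ):ℝ) := by exact_mod_cast hnat
          _ = 100*(2:ℝ)^k := by push_cast; ring
  · -- splitting
    intro x hx
    obtain ⟨P, hPF, hPb⟩ := hFs x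
    refine ⟨P, hPF, fun i => ?_⟩
    obtain ⟨h1, h2⟩ := hPb i
    rw [hx, mul_one] at h1 h2
    rw [hdd]
    have hkδ : (k:ℝ) * δ ≤ ε/4 := by
      rw [hδdef, mul_div_assoc']
      rw [div_le_div_iff₀ (by positivity) (by norm_num : (0:ℝ) < 4)]
      nlinarith
    have hlow : 1 - ε/4 ≤ (1-δ)^k := by
      have hb := one_add_mul_le_pow (by linarith : (-2:ℝ) ≤ -δ) k
      have : (1:ℝ) + (k:ℝ)*(-δ) = 1 - (k:ℝ)*δ := by ring
      rw [this] at hb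
      have h1d : (1:ℝ) + -δ = 1 - δ := by ring
      rw [h1d] at hb
      linarith
    have hup : (1+δ)^k ≤ 1 + ε/2 := by
      have h2kδ : 2*(k:ℝ)*δ ≤ 1 := by nlinarith
      have hb := pow_one_add_le δ hδpos.le k h2kδ
      linarith
    rw [abs_lt]
    constructor
    · nlinarith
    · nlinarith
end

section
/- Let d ≥ 1 be an integer, Δ > 0, and fix x ∈ ℝ^d. If an offset v is sampled uniformly from the cube [0, Δ]^d, then the expected number of lattice points u ∈ v + Δ·ℤ^d with ‖x − u‖_∞ ≤ (Δ + 2)/2 equals ((Δ + 2)/Δ)^d. In particular, for Δ = d this expectation is (1 + 2/d)^d ≤ e², i.e., each point of ℝ^d belongs on average to O(1) of the axis-aligned hypercubes of side length Δ + 2 centered at the points of the randomly shifted lattice v + Δ·ℤ^d. -/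
open MeasureTheory

open scoped ENNReal

private lemma finite_shift (Δ : ℝ) (hΔ : 0 < Δ) (c L v : ℝ) :
    {k : ℤ | |c - (v + Δ * k)| ≤ L}.Finite := by
  apply (Set.finite_Icc ⌈(c - L - v) / Δ⌉ ⌊(c + L - v) / Δ⌋).subset
  intro k hk
  rw [Set.mem_setOf_eq, abs_le] at hk
  constructor
  · rw [Int.ceil_le, div_le_iff₀ hΔ]
    nlinarith [hk.1, hk.2]
  · rw [Int.le_floor, le_div_iff₀ hΔ]
    nlinarith [hk.1, hk.2]

private lemma count_tsum (Δ : ℝ) (hΔ : 0 < Δ) (c L v : ℝ) :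
    (∑' k : ℤ, (Set.Icc (c - L - Δ * k) (c + L - Δ * k)).indicator (1 : ℝ → ℝ≥0∞) v)
      = (Nat.card {k : ℤ | |c - (v + Δ * k)| ≤ L} : ℝ≥0∞) := by
  have hset : ∀ k : ℤ, (Set.Icc (c - L - Δ * k) (c + L - Δ * k)).indicator (1 : ℝ → ℝ≥0∞) v
      = {k : ℤ | |c - (v + Δ * k)| ≤ L}.indicator (1 : ℤ → ℝ≥0∞) k := by
    intro k
    by_cases h : |c - (v + Δ * k)| ≤ L
    · have hk : k ∈ {k : ℤ | |c - (v + Δ * k)| ≤ L} := h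
      have hv : v ∈ Set.Icc (c - L - Δ * k) (c + L - Δ * k) := by
        rw [Set.mem_Icc]; have := abs_le.mp h; constructor <;> linarith [this.1, this.2]
      rw [Set.indicator_of_mem hv, Set.indicator_of_mem hk]; rfl
    · have hk : k ∉ {k : ℤ | |c - (v + Δ * k)| ≤ L} := h
      have hv : v ∉ Set.Icc (c - L - Δ * k) (c + L - Δ * k) := by
        rw [Set.mem_Icc]; intro hc; exact h (abs_le.mpr ⟨by linarith [hc.2], by linarith [hc.1]⟩)
      rw [Set.indicator_of_notMem hv, Set.indicator_of_notMem hk]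
  simp_rw [hset]
  rw [← tsum_subtype]
  haveI := (finite_shift Δ hΔ c L v).fintype
  rw [tsum_fintype]
  simp only [Pi.one_apply, Finset.sum_const, Finset.card_univ, nsmul_eq_mul, mul_one]
  exact_mod_cast congrArg (Nat.cast (R := ℝ≥0∞)) (Nat.card_eq_fintype_card (α := {k : ℤ | |c - (v + Δ * k)| ≤ L})).symm

private lemma tiling (Δ : ℝ) (hΔ : 0 < Δ) (a b : ℝ) :
    ∑' k : ℤ, volume (Set.Icc (a - Δ * k) (b - Δ * k) ∩ Set.Ico 0 Δ)
      = volume (Set.Icc a b) := by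
  have key : ∀ (i : ℤ) (y : ℝ), y ∈ Set.Ico (Δ * i) (Δ * i + Δ) → i = ⌊y / Δ⌋ := by
    intro i y hy
    refine (Int.floor_eq_iff.mpr ⟨?_, ?_⟩).symm
    · rw [le_div_iff₀ hΔ]; linarith [hy.1]
    · rw [div_lt_iff₀ hΔ]
      have : ((i : ℝ) + 1) * Δ = Δ * i + Δ := by ring
      rw [this]; exact hy.2
  have h1 : ∀ k : ℤ, volume (Set.Icc (a - Δ * k) (b - Δ * k) ∩ Set.Ico 0 Δ)
      = volume (Set.Ico (Δ * k) (Δ * k + Δ) ∩ Set.Icc a b) := by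
    intro k
    rw [← measure_preimage_add_right volume (Δ * k)
      (Set.Ico (Δ * k) (Δ * k + Δ) ∩ Set.Icc a b)]
    congr 1
    ext y
    simp only [Set.mem_inter_iff, Set.mem_Icc, Set.mem_Ico, Set.mem_preimage]
    constructor
    · rintro ⟨⟨h1, h2⟩, h3, h4⟩; exact ⟨⟨by linarith, by linarith⟩, by linarith, by linarith⟩
    · rintro ⟨⟨h1, h2⟩, h3, h4⟩; exact ⟨⟨by linarith, by linarith⟩, by linarith, by linarith⟩
  simp_rw [h1]
  rw [← measure_iUnion]
  · congr 1
    apply Set.Subset.antisymm (Set.iUnion_subset fun k => Set.inter_subset_right)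
    intro y hy
    refine Set.mem_iUnion.mpr ⟨⌊y / Δ⌋, ⟨?_, ?_⟩, hy⟩
    · rw [mul_comm, ← le_div_iff₀ hΔ]; exact Int.floor_le _
    · have h := Int.lt_floor_add_one (y / Δ)
      rw [div_lt_iff₀ hΔ] at h
      calc y < ((⌊y / Δ⌋ : ℝ) + 1) * Δ := h
        _ = Δ * ⌊y / Δ⌋ + Δ := by ring
  · intro i j hij
    refine Set.disjoint_left.mpr fun y hy hy' => hij ?_
    rw [key i y hy.1, key j y hy'.1]
  · exact fun k => (measurableSet_Ico.inter measurableSet_Icc)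

private lemma oneD (Δ : ℝ) (hΔ : 0 < Δ) (c L : ℝ) (hL : 0 ≤ L) :
    ∫ v in Set.Icc (0 : ℝ) Δ, (Nat.card {k : ℤ | |c - (v + Δ * k)| ≤ L} : ℝ) = 2 * L := by
  set F : ℝ → ℝ≥0∞ := fun v =>
    ∑' k : ℤ, (Set.Icc (c - L - Δ * k) (c + L - Δ * k)).indicator (1 : ℝ → ℝ≥0∞) v with hF
  have hFmeas : Measurable F :=
    Measurable.ennreal_tsum fun k => measurable_one.indicator measurableSet_Icc
  have hFeq : ∀ v, F v = (Nat.card {k : ℤ | |c - (v + Δ * k)| ≤ L} : ℝ≥0∞) :=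
    fun v => count_tsum Δ hΔ c L v
  have hFne : ∀ v, F v ≠ ∞ := fun v => by rw [hFeq v]; exact ENNReal.natCast_ne_top _
  have hgF : ∀ v, (Nat.card {k : ℤ | |c - (v + Δ * k)| ≤ L} : ℝ) = (F v).toReal := by
    intro v; rw [hFeq v]; simp
  have hlin : ∫⁻ v in Set.Ico (0 : ℝ) Δ, F v = ENNReal.ofReal (2 * L) := by
    rw [hF]
    rw [lintegral_tsum fun k => (measurable_one.indicator measurableSet_Icc).aemeasurable]
    have : ∀ k : ℤ, ∫⁻ v in Set.Ico (0 : ℝ) Δ,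
        (Set.Icc (c - L - Δ * k) (c + L - Δ * k)).indicator (1 : ℝ → ℝ≥0∞) v
        = volume (Set.Icc (c - L - Δ * k) (c + L - Δ * k) ∩ Set.Ico 0 Δ) := by
      intro k
      rw [lintegral_indicator_one measurableSet_Icc,
        Measure.restrict_apply measurableSet_Icc]
    simp_rw [this]
    rw [tiling Δ hΔ (c - L) (c + L), Real.volume_Icc]
    congr 1; ring
  rw [MeasureTheory.integral_Icc_eq_integral_Ico]
  have hmeas : Measurable fun v => (Nat.card {k : ℤ | |c - (v + Δ * k)| ≤ L} : ℝ) := by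
    have : (fun v => (Nat.card {k : ℤ | |c - (v + Δ * k)| ≤ L} : ℝ))
        = fun v => (F v).toReal := funext hgF
    rw [this]; exact ENNReal.measurable_toReal.comp hFmeas
  rw [integral_eq_lintegral_of_nonneg_ae
    (Filter.Eventually.of_forall fun v => Nat.cast_nonneg _)
    hmeas.aestronglyMeasurable]
  have : ∀ v, ENNReal.ofReal (Nat.card {k : ℤ | |c - (v + Δ * k)| ≤ L} : ℝ) = F v := by
    intro v; rw [hgF v, ENNReal.ofReal_toReal (hFne v)]
  simp_rw [this]
  rw [hlin, ENNReal.toReal_ofReal (by linarith)]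

/-- For a uniform offset `v ∈ [0, Δ]^d`, the expected number of lattice points
`u ∈ v + Δ·ℤ^d` with `‖x − u‖_∞ ≤ (Δ+2)/2` equals `((Δ+2)/Δ)^d`.  In particular, for `Δ = d`
this expectation is `(1 + 2/d)^d ≤ e²`: each point of `ℝ^d` belongs on average to `O(1)` of
the axis-aligned hypercubes of side length `Δ + 2` centered at the points of the randomly
shifted lattice `v + Δ·ℤ^d`. -/
theorem expected_hypercube_membership (d : ℕ) (hd : 1 ≤ d) (Δ : ℝ) (hΔ : 0 < Δ)
    (x : Fin d → ℝ) :
    (∫ v in {v : Fin d → ℝ | ∀ i, v i ∈ Set.Icc (0 : ℝ) Δ},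
        (Nat.card {k : Fin d → ℤ |
          ∀ i, |x i - (v i + Δ * (k i))| ≤ (Δ + 2) / 2} : ℝ) ∂volume) / Δ ^ d
      = ((Δ + 2) / Δ) ^ d ∧
    (Δ = (d : ℝ) →
      ((Δ + 2) / Δ) ^ d = (1 + 2 / (d : ℝ)) ^ d ∧
      (1 + 2 / (d : ℝ)) ^ d ≤ Real.exp 2) := by
  have hd0 : (d : ℝ) ≠ 0 := Nat.cast_ne_zero.mpr (by omega)
  constructor
  · -- main computation
    set g : ℝ → ℝ → ℝ := fun c w => (Nat.card {k : ℤ | |c - (w + Δ * k)| ≤ (Δ + 2) / 2} : ℝ)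
      with hg
    have hSmeas : MeasurableSet {v : Fin d → ℝ | ∀ i, v i ∈ Set.Icc (0 : ℝ) Δ} := by
      have : {v : Fin d → ℝ | ∀ i, v i ∈ Set.Icc (0 : ℝ) Δ}
          = Set.pi Set.univ (fun _ => Set.Icc (0 : ℝ) Δ) := by
        ext v; simp only [Set.mem_setOf_eq, Set.mem_univ_pi]
      rw [this]; exact MeasurableSet.univ_pi fun _ => measurableSet_Icc
    have hprod : ∀ v : Fin d → ℝ,
        ({v : Fin d → ℝ | ∀ i, v i ∈ Set.Icc (0 : ℝ) Δ}.indicator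
          (fun v => (Nat.card {k : Fin d → ℤ |
            ∀ i, |x i - (v i + Δ * (k i))| ≤ (Δ + 2) / 2} : ℝ)) v)
        = ∏ i, (Set.Icc (0 : ℝ) Δ).indicator (g (x i)) (v i) := by
      intro v
      by_cases h : v ∈ {v : Fin d → ℝ | ∀ i, v i ∈ Set.Icc (0 : ℝ) Δ}
      · rw [Set.indicator_of_mem h]
        have h2 : ∀ i, (Set.Icc (0 : ℝ) Δ).indicator (g (x i)) (v i) = g (x i) (v i) :=
          fun i => Set.indicator_of_mem (h i) _
        simp_rw [h2]
        have hset : {k : Fin d → ℤ | ∀ i, |x i - (v i + Δ * (k i))| ≤ (Δ + 2) / 2}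
            = Set.pi Set.univ (fun i => {n : ℤ | |x i - (v i + Δ * n)| ≤ (Δ + 2) / 2}) := by
          ext k; simp [Set.mem_pi]
        rw [hset, Nat.card_congr (Equiv.Set.univPi _), Nat.card_pi, Nat.cast_prod]
      · rw [Set.indicator_of_notMem h]
        simp only [Set.mem_setOf_eq, not_forall] at h
        obtain ⟨i, hi⟩ := h
        exact (Finset.prod_eq_zero (Finset.mem_univ i)
          (Set.indicator_of_notMem hi _)).symm
    rw [← integral_indicator hSmeas]
    simp_rw [hprod]
    rw [volume_pi, MeasureTheory.integral_fintype_prod_eq_prod (ι := Fin d)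
      (fun i => (Set.Icc (0 : ℝ) Δ).indicator (g (x i)))]
    have h1 : ∀ i : Fin d, ∫ w, (Set.Icc (0 : ℝ) Δ).indicator (g (x i)) w = Δ + 2 := by
      intro i
      rw [integral_indicator measurableSet_Icc, hg]
      have := oneD Δ hΔ (x i) ((Δ + 2) / 2) (by linarith)
      rw [this]; ring
    simp_rw [h1]
    rw [Finset.prod_const, Finset.card_univ, Fintype.card_fin, ← div_pow]
  · intro hΔd
    subst hΔd
    constructor
    · congr 1
      rw [add_div, div_self hd0]
    · have h1 : 1 + 2 / (d : ℝ) ≤ Real.exp (2 / d) := by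
        have := Real.add_one_le_exp (2 / (d : ℝ)); linarith
      calc (1 + 2 / (d : ℝ)) ^ d ≤ (Real.exp (2 / d)) ^ d := by
            apply pow_le_pow_left₀ (by positivity) h1
        _ = Real.exp 2 := by
            rw [← Real.exp_nat_mul, mul_div_cancel₀ _ hd0]
end
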